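/- arXiv:1510.08501 — 4 statements merged into one kernel-verified Lean document; each statement's English description precedes it below -/
import Mathlib

section
/- Let H be a Hopf algebra and J a normalized twist for H, written J = Σ J⁽¹⁾ ⊗ J⁽²⁾ with inverse J⁻¹ = Σ J⁻⁽¹⁾ ⊗ J⁻⁽²⁾. Define Q_J = Σ S(J⁽¹⁾)·J⁽²⁾ ∈ H. Then Q_J is invertible with inverse Q_J⁻¹ = Σ J⁻⁽¹⁾·S(J⁻⁽²⁾). -/
open TensorProduct

noncomputable section
variable (K B : Type*) [Field K] [Ring B] [Bialgebra K B]

/-- `ε ⊗ id : B ⊗ B → B`. -/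
def epsId : B ⊗[K] B →ₐ[K] B :=
  (Algebra.TensorProduct.lid K B).toAlgHom.comp
    (Algebra.TensorProduct.map (Bialgebra.counitAlgHom K B) (AlgHom.id K B))

/-- `id ⊗ ε : B ⊗ B → B`. -/
def idEps : B ⊗[K] B →ₐ[K] B :=
  (Algebra.TensorProduct.rid K K B).toAlgHom.comp
    (Algebra.TensorProduct.map (AlgHom.id K B) (Bialgebra.counitAlgHom K B))

/-- `Δ ⊗ id`, landing in `B ⊗ (B ⊗ B)`. -/
def comulId : B ⊗[K] B →ₐ[K] B ⊗[K] (B ⊗[K] B) :=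
  (Algebra.TensorProduct.assoc K K K B B B).toAlgHom.comp
    (Algebra.TensorProduct.map (Bialgebra.comulAlgHom K B) (AlgHom.id K B))

/-- `id ⊗ Δ`, landing in `B ⊗ (B ⊗ B)`. -/
def idComul : B ⊗[K] B →ₐ[K] B ⊗[K] (B ⊗[K] B) :=
  Algebra.TensorProduct.map (AlgHom.id K B) (Bialgebra.comulAlgHom K B)

/-- The cocycle condition `(Δ ⊗ id)(J)·(J ⊗ 1) = (id ⊗ Δ)(J)·(1 ⊗ J)` for a twist. -/
def IsTwist (J : B ⊗[K] B) : Prop :=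
  comulId K B J * (Algebra.TensorProduct.assoc K K K B B B (J ⊗ₜ 1)) =
    idComul K B J * ((1 : B) ⊗ₜ J)

/-- Normalization `(ε ⊗ id)(J) = (id ⊗ ε)(J) = 1`. -/
def IsNormalized (J : B ⊗[K] B) : Prop :=
  epsId K B J = 1 ∧ idEps K B J = 1

/-- The twisted comultiplication `a ↦ J⁻¹·Δ(a)·J` (with `J'` playing the role of `J⁻¹`). -/
def comulJ (J' J : B ⊗[K] B) : B →ₗ[K] B ⊗[K] B :=
  LinearMap.mulLeft K J' ∘ₗ LinearMap.mulRight K J ∘ₗ Coalgebra.comul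

end

noncomputable section
variable (K B : Type*) [Field K] [Ring B] [HopfAlgebra K B]

/-- The antipode as a linear map. -/
def anti : B →ₗ[K] B := HopfAlgebra.antipode (R := K) (A := B)

/-- `Q_J = Σ S(J⁽¹⁾)·J⁽²⁾`. -/
def QJ (J : B ⊗[K] B) : B := LinearMap.mul' K B ((anti K B).rTensor B J)

/-- `Σ J'⁽¹⁾·S(J'⁽²⁾)`; for `J' = J⁻¹` this is the inverse of `Q_J`. -/
def QJinv (J' : B ⊗[K] B) : B := LinearMap.mul' K B ((anti K B).lTensor B J')

/-- The twisted antipode `a ↦ Q_J⁻¹·S(a)·Q_J` (with `J'` playing the role of `J⁻¹`). -/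
def antiJ (J' J : B ⊗[K] B) : B →ₗ[K] B :=
  LinearMap.mulLeft K (QJinv K B J') ∘ₗ LinearMap.mulRight K (QJ K B J) ∘ₗ anti K B

end

noncomputable section
namespace QJaux

open Coalgebra HopfAlgebra

variable {K H : Type*} [Field K] [Ring H] [HopfAlgebra K H]

lemma sum_counit_left_smul {a : H} (r : Repr K a (H × H)) :
    ∑ i ∈ r.index, counit (R := K) (r.left i) • r.right i = a := by
  have h := congrArg (TensorProduct.lid K H) (sum_counit_tmul_eq (R := K) r)
  simp only [map_sum, TensorProduct.lid_tmul, one_smul] at h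
  exact h

lemma sum_counit_right_smul {a : H} (r : Repr K a (H × H)) :
    ∑ i ∈ r.index, counit (R := K) (r.right i) • r.left i = a := by
  have h := congrArg (TensorProduct.rid K H) (sum_tmul_counit_eq (R := K) r)
  simp only [map_sum, TensorProduct.rid_tmul, one_smul] at h
  exact h

lemma hopf_antipode_one : antipode (R := K) (1 : H) = 1 := by
  have h := mul_antipode_rTensor_comul_apply (R := K) (a := (1 : H))
  rw [Bialgebra.comul_one, Algebra.TensorProduct.one_def, LinearMap.rTensor_tmul,
    LinearMap.mul'_apply, mul_one, Bialgebra.counit_one] at h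
  rw [h, map_one]

lemma comul_mul_repr (x y : H) (rx : Repr K x (H × H)) (ry : Repr K y (H × H)) :
    Coalgebra.comul (R := K) (x * y) = ∑ i ∈ rx.index, ∑ j ∈ ry.index,
      (rx.left i * ry.left j) ⊗ₜ[K] (rx.right i * ry.right j) := by
  rw [Bialgebra.comul_mul, ← rx.eq, ← ry.eq, Finset.sum_mul_sum]
  simp only [Algebra.TensorProduct.tmul_mul_tmul]

lemma sum_mul_antipode_mul (x y : H) (rx : Repr K x (H × H)) (ry : Repr K y (H × H)) :
    ∑ i ∈ rx.index, ∑ j ∈ ry.index,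
      (rx.left i * ry.left j) * antipode (R := K) (rx.right i * ry.right j)
      = algebraMap K H (counit (R := K) x * counit (R := K) y) := by
  have h := mul_antipode_lTensor_comul_apply (R := K) (a := x * y)
  rw [comul_mul_repr x y rx ry, Bialgebra.counit_mul] at h
  simp only [map_sum, LinearMap.lTensor_tmul, LinearMap.mul'_apply] at h
  exact h


lemma mul_mul_algebraMap (u v : H) (c : K) :
    u * (v * algebraMap K H c) = c • (u * v) := by
  rw [← Algebra.commutes c v, ← mul_assoc, ← Algebra.commutes c u, mul_assoc, ← Algebra.smul_def]

lemma sum_rotate {α β γ M : Type*} [AddCommMonoid M] (s : Finset α) (t : α → Finset β)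
    (u : Finset γ) (f : α → β → γ → M) :
    ∑ x ∈ s, ∑ y ∈ t x, ∑ z ∈ u, f x y z = ∑ z ∈ u, ∑ x ∈ s, ∑ y ∈ t x, f x y z := by
  calc ∑ x ∈ s, ∑ y ∈ t x, ∑ z ∈ u, f x y z
      = ∑ x ∈ s, ∑ z ∈ u, ∑ y ∈ t x, f x y z :=
        Finset.sum_congr rfl fun x _ => Finset.sum_comm
    _ = ∑ z ∈ u, ∑ x ∈ s, ∑ y ∈ t x, f x y z := Finset.sum_comm

lemma collapse_right {a : H} (ra : Repr K a (H × H)) (rra : ∀ i, Repr K (ra.right i) (H × H)) (q r : H) :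
    ∑ i ∈ ra.index, ∑ k ∈ (rra i).index,
      antipode (R := K) (ra.left i) *
        (((rra i).left k * q) * antipode (R := K) ((rra i).right k * r))
      = q * antipode (R := K) (a * r) := by
  classical
  set S : H →ₗ[K] H := antipode (R := K) with hS
  set inner : H ⊗[K] H →ₗ[K] H :=
    LinearMap.mul' K H ∘ₗ TensorProduct.map (LinearMap.mulRight K q)
      (S ∘ₗ LinearMap.mulRight K r) with hinner
  set θ : H ⊗[K] (H ⊗[K] H) →ₗ[K] H :=
    LinearMap.mul' K H ∘ₗ LinearMap.rTensor H S ∘ₗ LinearMap.lTensor H inner with hθ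
  have θ_apply : ∀ x y z : H, θ (x ⊗ₜ[K] (y ⊗ₜ[K] z)) = S x * ((y * q) * S (z * r)) := by
    intro x y z
    simp [hθ, hinner, LinearMap.mul'_apply]
  have rla : ∀ i, Repr K (ra.left i) (H × H) := fun i => ℛ K _
  have hco := congrArg θ (sum_tmul_tmul_eq (R := K) ra rla rra)
  simp only [map_sum, θ_apply] at hco
  rw [← hco]
  have step : ∀ i ∈ ra.index,
      ∑ k ∈ (rla i).index,
        S ((rla i).left k) * (((rla i).right k * q) * S (ra.right i * r))
        = counit (R := K) (ra.left i) • (q * S (ra.right i * r)) := by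
    intro i _
    have e : ∀ k, S ((rla i).left k) * (((rla i).right k * q) * S (ra.right i * r))
        = (S ((rla i).left k) * (rla i).right k) * (q * S (ra.right i * r)) := by
      intro k
      rw [mul_assoc ((rla i).right k), ← mul_assoc (S ((rla i).left k))]
    rw [Finset.sum_congr rfl fun k _ => e k, ← Finset.sum_mul]
    rw [show (∑ k ∈ (rla i).index, S ((rla i).left k) * (rla i).right k)
        = algebraMap K H (counit (R := K) (ra.left i)) from sum_antipode_mul_eq_algebraMap_counit (rla i)]
    rw [Algebra.smul_def]
  rw [Finset.sum_congr rfl step]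
  set L : H →ₗ[K] H := LinearMap.mulLeft K q ∘ₗ S ∘ₗ LinearMap.mulRight K r with hL
  have hLapp : ∀ z : H, L z = q * S (z * r) := by intro z; simp [hL]
  calc ∑ i ∈ ra.index, counit (R := K) (ra.left i) • (q * S (ra.right i * r))
      = ∑ i ∈ ra.index, L (counit (R := K) (ra.left i) • ra.right i) := by
        refine Finset.sum_congr rfl fun i _ => ?_
        rw [map_smul, hLapp]
    _ = L (∑ i ∈ ra.index, counit (R := K) (ra.left i) • ra.right i) := (map_sum L _ _).symm
    _ = q * S (a * r) := by rw [sum_counit_left_smul ra, hLapp]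

lemma collapse_left {a : H} (ra : Repr K a (H × H)) (rra : ∀ i, Repr K (ra.right i) (H × H)) (q r : H) :
    ∑ i ∈ ra.index, ∑ k ∈ (rra i).index,
      antipode (R := K) (ra.left i) *
        (((rra i).left k * q) * antipode (R := K) (r * (rra i).right k))
      = q * antipode (R := K) (r * a) := by
  classical
  set S : H →ₗ[K] H := antipode (R := K) with hS
  set inner : H ⊗[K] H →ₗ[K] H :=
    LinearMap.mul' K H ∘ₗ TensorProduct.map (LinearMap.mulRight K q)
      (S ∘ₗ LinearMap.mulLeft K r) with hinner
  set θ : H ⊗[K] (H ⊗[K] H) →ₗ[K] H :=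
    LinearMap.mul' K H ∘ₗ LinearMap.rTensor H S ∘ₗ LinearMap.lTensor H inner with hθ
  have θ_apply : ∀ x y z : H, θ (x ⊗ₜ[K] (y ⊗ₜ[K] z)) = S x * ((y * q) * S (r * z)) := by
    intro x y z
    simp [hθ, hinner, LinearMap.mul'_apply]
  have rla : ∀ i, Repr K (ra.left i) (H × H) := fun i => ℛ K _
  have hco := congrArg θ (sum_tmul_tmul_eq (R := K) ra rla rra)
  simp only [map_sum, θ_apply] at hco
  rw [← hco]
  have step : ∀ i ∈ ra.index,
      ∑ k ∈ (rla i).index,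
        S ((rla i).left k) * (((rla i).right k * q) * S (r * ra.right i))
        = counit (R := K) (ra.left i) • (q * S (r * ra.right i)) := by
    intro i _
    have e : ∀ k, S ((rla i).left k) * (((rla i).right k * q) * S (r * ra.right i))
        = (S ((rla i).left k) * (rla i).right k) * (q * S (r * ra.right i)) := by
      intro k
      rw [mul_assoc ((rla i).right k), ← mul_assoc (S ((rla i).left k))]
    rw [Finset.sum_congr rfl fun k _ => e k, ← Finset.sum_mul]
    rw [show (∑ k ∈ (rla i).index, S ((rla i).left k) * (rla i).right k)
        = algebraMap K H (counit (R := K) (ra.left i)) from sum_antipode_mul_eq_algebraMap_counit (rla i)]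
    rw [Algebra.smul_def]
  rw [Finset.sum_congr rfl step]
  set L : H →ₗ[K] H := LinearMap.mulLeft K q ∘ₗ S ∘ₗ LinearMap.mulLeft K r with hL
  have hLapp : ∀ z : H, L z = q * S (r * z) := by intro z; simp [hL]
  calc ∑ i ∈ ra.index, counit (R := K) (ra.left i) • (q * S (r * ra.right i))
      = ∑ i ∈ ra.index, L (counit (R := K) (ra.left i) • ra.right i) := by
        refine Finset.sum_congr rfl fun i _ => ?_
        rw [map_smul, hLapp]
    _ = L (∑ i ∈ ra.index, counit (R := K) (ra.left i) • ra.right i) := (map_sum L _ _).symm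
    _ = q * S (r * a) := by rw [sum_counit_left_smul ra, hLapp]


lemma hopf_antipode_mul (a b : H) :
    antipode (R := K) (a * b) = antipode (R := K) b * antipode (R := K) a := by
  classical
  set S : H →ₗ[K] H := antipode (R := K) with hS
  let ra : Repr K a (H × H) := ℛ K a
  let rb : Repr K b (H × H) := ℛ K b
  let rra : ∀ i, Repr K (ra.right i) (H × H) := fun i => ℛ K _
  let rrb : ∀ j, Repr K (rb.right j) (H × H) := fun j => ℛ K _
  have hSa : ∑ i ∈ ra.index, counit (R := K) (ra.right i) • S (ra.left i) = S a := by
    calc ∑ i ∈ ra.index, counit (R := K) (ra.right i) • S (ra.left i)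
        = ∑ i ∈ ra.index, S (counit (R := K) (ra.right i) • ra.left i) :=
          Finset.sum_congr rfl fun i _ => (map_smul S _ _).symm
      _ = S (∑ i ∈ ra.index, counit (R := K) (ra.right i) • ra.left i) := (map_sum S _ _).symm
      _ = S a := by rw [sum_counit_right_smul ra]
  have hSb : ∑ j ∈ rb.index, counit (R := K) (rb.right j) • S (rb.left j) = S b := by
    calc ∑ j ∈ rb.index, counit (R := K) (rb.right j) • S (rb.left j)
        = ∑ j ∈ rb.index, S (counit (R := K) (rb.right j) • rb.left j) :=
          Finset.sum_congr rfl fun j _ => (map_smul S _ _).symm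
      _ = S (∑ j ∈ rb.index, counit (R := K) (rb.right j) • rb.left j) := (map_sum S _ _).symm
      _ = S b := by rw [sum_counit_right_smul rb]
  set Y : H := ∑ j ∈ rb.index, ∑ i ∈ ra.index, ∑ k ∈ (rra i).index, ∑ l ∈ (rrb j).index,
      S (rb.left j) * (S (ra.left i) * (((rra i).left k * (rrb j).left l) *
        S ((rra i).right k * (rrb j).right l))) with hY
  have wayA : Y = S b * S a := by
    rw [hY]
    have inner : ∀ j ∈ rb.index, ∀ i ∈ ra.index,
        (∑ k ∈ (rra i).index, ∑ l ∈ (rrb j).index,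
          S (rb.left j) * (S (ra.left i) * (((rra i).left k * (rrb j).left l) *
            S ((rra i).right k * (rrb j).right l))))
        = (counit (R := K) (ra.right i) * counit (R := K) (rb.right j)) •
            (S (rb.left j) * S (ra.left i)) := by
      intro j _ i _
      simp only [← Finset.mul_sum]
      rw [sum_mul_antipode_mul (ra.right i) (rb.right j) (rra i) (rrb j)]
      rw [show S (rb.left j) * (S (ra.left i) * algebraMap K H
            (counit (R := K) (ra.right i) * counit (R := K) (rb.right j)))
          = (counit (R := K) (ra.right i) * counit (R := K) (rb.right j)) •
            (S (rb.left j) * S (ra.left i)) from mul_mul_algebraMap _ _ _]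
    calc ∑ j ∈ rb.index, ∑ i ∈ ra.index, ∑ k ∈ (rra i).index, ∑ l ∈ (rrb j).index,
          S (rb.left j) * (S (ra.left i) * (((rra i).left k * (rrb j).left l) *
            S ((rra i).right k * (rrb j).right l)))
        = ∑ j ∈ rb.index, ∑ i ∈ ra.index,
            (counit (R := K) (ra.right i) * counit (R := K) (rb.right j)) •
              (S (rb.left j) * S (ra.left i)) := by
          refine Finset.sum_congr rfl fun j hj => Finset.sum_congr rfl fun i hi => ?_
          exact inner j hj i hi
      _ = ∑ j ∈ rb.index, counit (R := K) (rb.right j) •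
            (S (rb.left j) * (∑ i ∈ ra.index, counit (R := K) (ra.right i) • S (ra.left i))) := by
          refine Finset.sum_congr rfl fun j _ => ?_
          rw [Finset.mul_sum, Finset.smul_sum]
          refine Finset.sum_congr rfl fun i _ => ?_
          rw [mul_smul_comm, mul_smul, smul_comm]
      _ = ∑ j ∈ rb.index, counit (R := K) (rb.right j) • (S (rb.left j) * S a) := by
          rw [hSa]
      _ = (∑ j ∈ rb.index, counit (R := K) (rb.right j) • S (rb.left j)) * S a := by
          rw [Finset.sum_mul]
          exact Finset.sum_congr rfl fun j _ => (smul_mul_assoc _ _ _).symm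
      _ = S b * S a := by rw [hSb]
  have wayB : Y = S (a * b) := by
    rw [hY]
    calc ∑ j ∈ rb.index, ∑ i ∈ ra.index, ∑ k ∈ (rra i).index, ∑ l ∈ (rrb j).index,
          S (rb.left j) * (S (ra.left i) * (((rra i).left k * (rrb j).left l) *
            S ((rra i).right k * (rrb j).right l)))
        = ∑ j ∈ rb.index, ∑ l ∈ (rrb j).index, ∑ i ∈ ra.index, ∑ k ∈ (rra i).index,
            S (rb.left j) * (S (ra.left i) * (((rra i).left k * (rrb j).left l) *
              S ((rra i).right k * (rrb j).right l))) :=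
          Finset.sum_congr rfl fun j _ => sum_rotate _ _ _ _
      _ = ∑ j ∈ rb.index, ∑ l ∈ (rrb j).index,
            S (rb.left j) * ((rrb j).left l * S (a * (rrb j).right l)) := by
          refine Finset.sum_congr rfl fun j _ => Finset.sum_congr rfl fun l _ => ?_
          rw [← collapse_right ra rra ((rrb j).left l) ((rrb j).right l)]
          simp only [Finset.mul_sum]
          rfl
      _ = ∑ j ∈ rb.index, ∑ l ∈ (rrb j).index,
            S (rb.left j) * (((rrb j).left l * 1) * S (a * (rrb j).right l)) := by
          simp only [mul_one]
      _ = 1 * S (a * b) := collapse_left rb rrb 1 a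
      _ = S (a * b) := one_mul _
  rw [← wayB, wayA]


lemma anti_one : anti K H 1 = 1 := hopf_antipode_one

lemma anti_mul (u v : H) : anti K H (u * v) = anti K H v * anti K H u :=
  hopf_antipode_mul u v

lemma QJ_comul (x : H) :
    QJ K H (Coalgebra.comul (R := K) x) = algebraMap K H (counit (R := K) x) :=
  mul_antipode_rTensor_comul_apply x

lemma QJinv_comul (x : H) :
    QJinv K H (Coalgebra.comul (R := K) x) = algebraMap K H (counit (R := K) x) :=
  mul_antipode_lTensor_comul_apply x

lemma QJ_tmul (f g : H) : QJ K H (f ⊗ₜ[K] g) = anti K H f * g := by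
  simp [QJ, LinearMap.mul'_apply]

lemma QJinv_tmul (f g : H) : QJinv K H (f ⊗ₜ[K] g) = f * anti K H g := by
  simp [QJinv, LinearMap.mul'_apply]

lemma QJ_zero : QJ K H 0 = 0 := by simp [QJ]

lemma QJinv_zero : QJinv K H 0 = 0 := by simp [QJinv]

lemma QJ_add (x y : H ⊗[K] H) : QJ K H (x + y) = QJ K H x + QJ K H y := by
  simp [QJ, map_add]

lemma QJinv_add (x y : H ⊗[K] H) : QJinv K H (x + y) = QJinv K H x + QJinv K H y := by
  simp [QJinv, map_add]

/-- `a ⊗ (b ⊗ c) ↦ a * (S b * c)`. -/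
def Phi (K H : Type*) [Field K] [Ring H] [HopfAlgebra K H] :
    H ⊗[K] (H ⊗[K] H) →ₗ[K] H :=
  LinearMap.mul' K H ∘ₗ
    LinearMap.lTensor H (LinearMap.mul' K H ∘ₗ LinearMap.rTensor H (anti K H))

/-- `a ⊗ (b ⊗ c) ↦ S a * (b * S c)`. -/
def Psi (K H : Type*) [Field K] [Ring H] [HopfAlgebra K H] :
    H ⊗[K] (H ⊗[K] H) →ₗ[K] H :=
  LinearMap.mul' K H ∘ₗ LinearMap.rTensor H (anti K H) ∘ₗ
    LinearMap.lTensor H (LinearMap.mul' K H ∘ₗ LinearMap.lTensor H (anti K H))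

lemma Phi_tmul (a b c : H) : Phi K H (a ⊗ₜ[K] (b ⊗ₜ[K] c)) = a * (anti K H b * c) := by
  simp [Phi, LinearMap.mul'_apply]

lemma Psi_tmul (a b c : H) :
    Psi K H (a ⊗ₜ[K] (b ⊗ₜ[K] c)) = anti K H a * (b * anti K H c) := by
  simp [Psi, LinearMap.mul'_apply]

lemma mlPhi (a c : H) (x y : H ⊗[K] H) :
    Phi K H ((a ⊗ₜ[K] y) * (Algebra.TensorProduct.assoc K K K H H H (x ⊗ₜ[K] c))) =
      a * QJinv K H x * (QJ K H y * c) := by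
  induction x using TensorProduct.induction_on with
  | zero => simp [QJinv_zero]
  | add x₁ x₂ h₁ h₂ =>
      simp only [add_tmul, map_add, mul_add, QJinv_add, add_mul, h₁, h₂]
  | tmul p q =>
      induction y using TensorProduct.induction_on with
      | zero => simp [QJ_zero]
      | add y₁ y₂ h₁ h₂ =>
          simp only [tmul_add, add_mul, map_add, QJ_add, mul_add, h₁, h₂]
      | tmul u v =>
          rw [Algebra.TensorProduct.assoc_tmul, Algebra.TensorProduct.tmul_mul_tmul,
            Algebra.TensorProduct.tmul_mul_tmul, Phi_tmul, QJ_tmul, QJinv_tmul,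
            anti_mul]
          simp only [mul_assoc]

lemma mlPsi (a c : H) (x y : H ⊗[K] H) :
    Psi K H ((Algebra.TensorProduct.assoc K K K H H H (x ⊗ₜ[K] c)) * (a ⊗ₜ[K] y)) =
      anti K H a * QJ K H x * (QJinv K H y * anti K H c) := by
  induction x using TensorProduct.induction_on with
  | zero => simp [QJ_zero]
  | add x₁ x₂ h₁ h₂ =>
      simp only [add_tmul, map_add, mul_add, QJ_add, add_mul, h₁, h₂]
  | tmul p q =>
      induction y using TensorProduct.induction_on with
      | zero => simp [QJinv_zero]
      | add y₁ y₂ h₁ h₂ =>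
          simp only [tmul_add, mul_add, map_add, QJinv_add, add_mul, h₁, h₂]
      | tmul u v =>
          rw [Algebra.TensorProduct.assoc_tmul, Algebra.TensorProduct.tmul_mul_tmul,
            Algebra.TensorProduct.tmul_mul_tmul, Psi_tmul, QJ_tmul, QJinv_tmul,
            anti_mul, anti_mul]
          simp only [mul_assoc]

lemma idComul_tmul (f g : H) :
    idComul K H (f ⊗ₜ[K] g) = f ⊗ₜ[K] (Coalgebra.comul (R := K) g) := by
  simp [idComul]

lemma comulId_tmul (f g : H) :
    comulId K H (f ⊗ₜ[K] g) =
      Algebra.TensorProduct.assoc K K K H H H ((Coalgebra.comul (R := K) f) ⊗ₜ[K] g) := by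
  simp [comulId]

lemma idEps_tmul (f g : H) : idEps K H (f ⊗ₜ[K] g) = counit (R := K) g • f := by
  simp [idEps]

lemma epsId_tmul (f g : H) : epsId K H (f ⊗ₜ[K] g) = counit (R := K) f • g := by
  simp [epsId]

lemma Phi_eq (U V : H ⊗[K] H) :
    Phi K H (idComul K H V * comulId K H U) = idEps K H V * epsId K H U := by
  induction U using TensorProduct.induction_on with
  | zero => simp
  | add u₁ u₂ h₁ h₂ => simp only [map_add, mul_add, h₁, h₂]
  | tmul f g =>
      induction V using TensorProduct.induction_on with
      | zero => simp
      | add v₁ v₂ h₁ h₂ => simp only [map_add, add_mul, h₁, h₂]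
      | tmul fb gb =>
          rw [idComul_tmul, comulId_tmul, mlPhi, QJinv_comul, QJ_comul,
            idEps_tmul, epsId_tmul]
          simp [Algebra.algebraMap_eq_smul_one, mul_smul_comm, smul_mul_assoc,
            smul_smul, mul_comm]

lemma Psi_eq (U V : H ⊗[K] H) :
    Psi K H (comulId K H V * idComul K H U) =
      anti K H (idEps K H U) * anti K H (epsId K H V) := by
  induction U using TensorProduct.induction_on with
  | zero => simp
  | add u₁ u₂ h₁ h₂ => simp only [map_add, mul_add, add_mul, h₁, h₂]
  | tmul f g =>
      induction V using TensorProduct.induction_on with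
      | zero => simp
      | add v₁ v₂ h₁ h₂ => simp only [map_add, add_mul, mul_add, h₁, h₂]
      | tmul fb gb =>
          rw [idComul_tmul, comulId_tmul, mlPsi, QJinv_comul, QJ_comul,
            idEps_tmul, epsId_tmul, map_smul, map_smul]
          simp [Algebra.algebraMap_eq_smul_one, mul_smul_comm, smul_mul_assoc,
            smul_smul, mul_comm]


end QJaux
end

variable {K H : Type*} [Field K] [Ring H] [HopfAlgebra K H]

open QJaux in
theorem QJ_invertible (J J' : H ⊗[K] H)
    (hJ : J * J' = 1) (hJ' : J' * J = 1) (hc : IsTwist K H J) (hn : IsNormalized K H J) :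
    QJ K H J * QJinv K H J' = 1 ∧ QJinv K H J' * QJ K H J = 1 := by
  obtain ⟨hn1, hn2⟩ := hn
  have hn1' : epsId K H J' = 1 := by
    have h := congrArg (epsId K H) hJ
    rwa [map_mul, hn1, one_mul, map_one] at h
  have hn2' : idEps K H J' = 1 := by
    have h := congrArg (idEps K H) hJ
    rwa [map_mul, hn2, one_mul, map_one] at h
  have hci' : comulId K H J' * comulId K H J = 1 := by
    rw [← map_mul, hJ', map_one]
  have hic' : idComul K H J' * idComul K H J = 1 := by
    rw [← map_mul, hJ', map_one]
  have has : (Algebra.TensorProduct.assoc K K K H H H (J ⊗ₜ[K] (1 : H))) *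
      (Algebra.TensorProduct.assoc K K K H H H (J' ⊗ₜ[K] (1 : H))) = 1 := by
    rw [← map_mul, Algebra.TensorProduct.tmul_mul_tmul, hJ, mul_one,
      ← Algebra.TensorProduct.one_def, map_one]
  have hj1 : ((1 : H) ⊗ₜ[K] J) * ((1 : H) ⊗ₜ[K] J') = 1 := by
    rw [Algebra.TensorProduct.tmul_mul_tmul, hJ, mul_one, ← Algebra.TensorProduct.one_def]
  have hcup := hc
  unfold IsTwist at hcup
  have eq1 : ((1 : H) ⊗ₜ[K] J) * (Algebra.TensorProduct.assoc K K K H H H (J' ⊗ₜ[K] (1 : H))) =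
      idComul K H J' * comulId K H J := by
    calc ((1 : H) ⊗ₜ[K] J) * (Algebra.TensorProduct.assoc K K K H H H (J' ⊗ₜ[K] (1 : H)))
        = (idComul K H J' * idComul K H J) *
            (((1 : H) ⊗ₜ[K] J) * (Algebra.TensorProduct.assoc K K K H H H (J' ⊗ₜ[K] (1 : H)))) := by
          rw [hic', one_mul]
      _ = idComul K H J' * ((idComul K H J * ((1 : H) ⊗ₜ[K] J)) *
            (Algebra.TensorProduct.assoc K K K H H H (J' ⊗ₜ[K] (1 : H)))) := by
          simp only [mul_assoc]
      _ = idComul K H J' * ((comulId K H J * (Algebra.TensorProduct.assoc K K K H H H (J ⊗ₜ 1))) *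
            (Algebra.TensorProduct.assoc K K K H H H (J' ⊗ₜ[K] (1 : H)))) := by rw [hcup]
      _ = idComul K H J' * (comulId K H J *
            ((Algebra.TensorProduct.assoc K K K H H H (J ⊗ₜ 1)) *
              (Algebra.TensorProduct.assoc K K K H H H (J' ⊗ₜ[K] (1 : H))))) := by
          simp only [mul_assoc]
      _ = idComul K H J' * comulId K H J := by rw [has, mul_one]
  have eq2 : (Algebra.TensorProduct.assoc K K K H H H (J ⊗ₜ[K] (1 : H))) * ((1 : H) ⊗ₜ[K] J') =
      comulId K H J' * idComul K H J := by
    calc (Algebra.TensorProduct.assoc K K K H H H (J ⊗ₜ[K] (1 : H))) * ((1 : H) ⊗ₜ[K] J')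
        = (comulId K H J' * comulId K H J) *
            ((Algebra.TensorProduct.assoc K K K H H H (J ⊗ₜ[K] (1 : H))) * ((1 : H) ⊗ₜ[K] J')) := by
          rw [hci', one_mul]
      _ = comulId K H J' * ((comulId K H J *
            (Algebra.TensorProduct.assoc K K K H H H (J ⊗ₜ 1))) * ((1 : H) ⊗ₜ[K] J')) := by
          simp only [mul_assoc]
      _ = comulId K H J' * ((idComul K H J * ((1 : H) ⊗ₜ[K] J)) * ((1 : H) ⊗ₜ[K] J')) := by
          rw [hcup]
      _ = comulId K H J' * (idComul K H J * (((1 : H) ⊗ₜ[K] J) * ((1 : H) ⊗ₜ[K] J'))) := by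
          simp only [mul_assoc]
      _ = comulId K H J' * idComul K H J := by rw [hj1, mul_one]
  constructor
  · have h := congrArg (Psi K H) eq2
    rw [mlPsi, Psi_eq] at h
    rw [anti_one, one_mul, mul_one, hn2, hn1', anti_one, mul_one] at h
    exact h
  · have h := congrArg (Phi K H) eq1
    rw [mlPhi, Phi_eq] at h
    rw [one_mul, mul_one, hn2', hn1, one_mul] at h
    exact h
end

section
/- Let H be a Hopf algebra and J a normalized twist for H. Writing J = Σ J⁽¹⁾ ⊗ J⁽²⁾ and using Sweedler notation for Δ, one has Σ S(J⁽¹⁾)·J⁽²⁾₍₁₎ ⊗ J⁽²⁾₍₂₎ = (Q_J ⊗ 1)·J⁻¹, where Q_J = Σ S(J⁽¹⁾)·J⁽²⁾. -/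
open TensorProduct

section TwistAux
namespace TwistAux
open Coalgebra HopfAlgebra

set_option maxHeartbeats 1600000

theorem sum4_comm {M : Type*} [AddCommMonoid M]
    {ιa ιb : Type*} {κa : ιa → Type*} {κb : ιb → Type*}
    (sa : Finset ιa) (sb : Finset ιb) (ta : ∀ i, Finset (κa i)) (tb : ∀ j, Finset (κb j))
    (F : ∀ i, κa i → ∀ j, κb j → M) :
    ∑ i ∈ sa, ∑ j ∈ sb, ∑ k ∈ ta i, ∑ l ∈ tb j, F i k j l =
    ∑ j ∈ sb, ∑ l ∈ tb j, ∑ i ∈ sa, ∑ k ∈ ta i, F i k j l := by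
  calc
    ∑ i ∈ sa, ∑ j ∈ sb, ∑ k ∈ ta i, ∑ l ∈ tb j, F i k j l
      = ∑ i ∈ sa, ∑ j ∈ sb, ∑ l ∈ tb j, ∑ k ∈ ta i, F i k j l :=
        Finset.sum_congr rfl fun i _ => Finset.sum_congr rfl fun j _ =>
          Finset.sum_comm
    _ = ∑ i ∈ sa, ∑ p ∈ sb.sigma tb, ∑ k ∈ ta i, F i k p.1 p.2 :=
        Finset.sum_congr rfl fun i _ =>
          (Finset.sum_sigma sb tb fun p => ∑ k ∈ ta i, F i k p.1 p.2).symm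
    _ = ∑ p ∈ sb.sigma tb, ∑ i ∈ sa, ∑ k ∈ ta i, F i k p.1 p.2 :=
        Finset.sum_comm
    _ = ∑ j ∈ sb, ∑ l ∈ tb j, ∑ i ∈ sa, ∑ k ∈ ta i, F i k j l :=
        Finset.sum_sigma sb tb fun p => ∑ i ∈ sa, ∑ k ∈ ta i, F i k p.1 p.2

theorem sum4_comm' {M : Type*} [AddCommMonoid M]
    {ιa ιb : Type*} {κa : ιa → Type*} {κb : ιb → Type*}
    (sa : Finset ιa) (sb : Finset ιb) (ta : ∀ i, Finset (κa i)) (tb : ∀ j, Finset (κb j))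
    (F : ∀ i, κa i → ∀ j, κb j → M) :
    ∑ j ∈ sb, ∑ l ∈ tb j, ∑ i ∈ sa, ∑ k ∈ ta i, F i k j l =
    ∑ i ∈ sa, ∑ k ∈ ta i, ∑ j ∈ sb, ∑ l ∈ tb j, F i k j l := by
  calc
    ∑ j ∈ sb, ∑ l ∈ tb j, ∑ i ∈ sa, ∑ k ∈ ta i, F i k j l
      = ∑ p ∈ sb.sigma tb, ∑ i ∈ sa, ∑ k ∈ ta i, F i k p.1 p.2 :=
        (Finset.sum_sigma sb tb fun p => ∑ i ∈ sa, ∑ k ∈ ta i, F i k p.1 p.2).symm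
    _ = ∑ p ∈ sb.sigma tb, ∑ q ∈ sa.sigma ta, F q.1 q.2 p.1 p.2 :=
        Finset.sum_congr rfl fun p _ =>
          (Finset.sum_sigma sa ta fun q => F q.1 q.2 p.1 p.2).symm
    _ = ∑ q ∈ sa.sigma ta, ∑ p ∈ sb.sigma tb, F q.1 q.2 p.1 p.2 :=
        Finset.sum_comm
    _ = ∑ q ∈ sa.sigma ta, ∑ j ∈ sb, ∑ l ∈ tb j, F q.1 q.2 j l :=
        Finset.sum_congr rfl fun q _ =>
          Finset.sum_sigma sb tb fun p => F q.1 q.2 p.1 p.2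
    _ = ∑ i ∈ sa, ∑ k ∈ ta i, ∑ j ∈ sb, ∑ l ∈ tb j, F i k j l :=
        Finset.sum_sigma sa ta fun q => ∑ j ∈ sb, ∑ l ∈ tb j, F q.1 q.2 j l


variable {K H : Type*} [CommSemiring K] [Ring H] [HopfAlgebra K H]

theorem sum_counit_left_smul_right (a : H) (r : Coalgebra.Repr K a (H × H)) :
    ∑ i ∈ r.index, counit (R := K) (r.left i) • r.right i = a := by
  have h := congrArg (TensorProduct.lid K H) (sum_counit_tmul_eq (R := K) r)
  simp only [map_sum, lid_tmul] at h
  simpa using h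

theorem sum_counit_right_smul_left (a : H) (r : Coalgebra.Repr K a (H × H)) :
    ∑ i ∈ r.index, counit (R := K) (r.right i) • r.left i = a := by
  have h := congrArg (TensorProduct.rid K H) (sum_tmul_counit_eq (R := K) r)
  simp only [map_sum, rid_tmul] at h
  simpa using h

theorem sum_mul3_eq (a : H) (r : Coalgebra.Repr K a (H × H)) (r1 : ∀ i, Coalgebra.Repr K (r.left i) (H × H))
    (r2 : ∀ i, Coalgebra.Repr K (r.right i) (H × H)) (f g h : H →ₗ[K] H) :
    ∑ i ∈ r.index, ∑ k ∈ (r1 i).index,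
      f ((r1 i).left k) * (g ((r1 i).right k) * h (r.right i)) =
    ∑ i ∈ r.index, ∑ k ∈ (r2 i).index,
      f (r.left i) * (g ((r2 i).left k) * h ((r2 i).right k)) := by
  have h3 := sum_tmul_tmul_eq (R := K) r r1 r2
  have h4 := congrArg (LinearMap.mul' K H ∘ₗ map f (LinearMap.mul' K H ∘ₗ map g h)) h3
  simpa [map_sum] using h4

theorem sum_S_mul (x y : H) (rx : Coalgebra.Repr K x (H × H)) (ry : Coalgebra.Repr K y (H × H)) :
    ∑ k ∈ rx.index, ∑ l ∈ ry.index,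
      antipode (R := K) (rx.left k * ry.left l) * (rx.right k * ry.right l) =
    counit (R := K) (x * y) • (1 : H) := by
  have hcm : Coalgebra.comul (R := K) (x * y) =
      ∑ k ∈ rx.index, ∑ l ∈ ry.index,
        (rx.left k * ry.left l) ⊗ₜ[K] (rx.right k * ry.right l) := by
    rw [Bialgebra.comul_mul, ← rx.eq, ← ry.eq, Finset.sum_mul_sum]
    simp [Algebra.TensorProduct.tmul_mul_tmul]
  have h := mul_antipode_rTensor_comul_apply (R := K) (x * y)
  rw [hcm] at h
  simpa [map_sum, Algebra.smul_def] using h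

theorem master_eq_S_mul (a b : H) (ra : Coalgebra.Repr K a (H × H)) (rb : Coalgebra.Repr K b (H × H))
    (ra2 : ∀ i, Coalgebra.Repr K (ra.right i) (H × H)) (rb2 : ∀ j, Coalgebra.Repr K (rb.right j) (H × H)) :
    (∑ i ∈ ra.index, ∑ j ∈ rb.index, ∑ k ∈ (ra2 i).index, ∑ l ∈ (rb2 j).index,
        antipode (R := K) (ra.left i * rb.left j) *
          (((ra2 i).left k * (rb2 j).left l) *
            (antipode (R := K) ((rb2 j).right l) * antipode (R := K) ((ra2 i).right k))))
      = antipode (R := K) (a * b) := by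
  set S : H →ₗ[K] H := antipode (R := K) with hS
  calc
    (∑ i ∈ ra.index, ∑ j ∈ rb.index, ∑ k ∈ (ra2 i).index, ∑ l ∈ (rb2 j).index,
        S (ra.left i * rb.left j) *
          (((ra2 i).left k * (rb2 j).left l) *
            (S ((rb2 j).right l) * S ((ra2 i).right k))))
      = ∑ i ∈ ra.index, ∑ j ∈ rb.index,
          (counit (R := K) (ra.right i) * counit (R := K) (rb.right j)) •
            S (ra.left i * rb.left j) := by
        refine Finset.sum_congr rfl fun i _ => Finset.sum_congr rfl fun j _ => ?_
        calc
          (∑ k ∈ (ra2 i).index, ∑ l ∈ (rb2 j).index,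
              S (ra.left i * rb.left j) *
                (((ra2 i).left k * (rb2 j).left l) *
                  (S ((rb2 j).right l) * S ((ra2 i).right k))))
            = ∑ k ∈ (ra2 i).index, ∑ l ∈ (rb2 j).index,
                (S (ra.left i * rb.left j) * (ra2 i).left k) *
                  (((rb2 j).left l * S ((rb2 j).right l)) * S ((ra2 i).right k)) := by
              refine Finset.sum_congr rfl fun k _ => Finset.sum_congr rfl fun l _ => ?_
              simp only [mul_assoc]
          _ = ∑ k ∈ (ra2 i).index,
                (S (ra.left i * rb.left j) * (ra2 i).left k) *
                  ((∑ l ∈ (rb2 j).index, (rb2 j).left l * S ((rb2 j).right l)) *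
                    S ((ra2 i).right k)) := by
              refine Finset.sum_congr rfl fun k _ => ?_
              rw [← Finset.mul_sum, ← Finset.sum_mul]
          _ = ∑ k ∈ (ra2 i).index,
                counit (R := K) (rb.right j) •
                  (S (ra.left i * rb.left j) * ((ra2 i).left k * S ((ra2 i).right k))) := by
              refine Finset.sum_congr rfl fun k _ => ?_
              rw [sum_mul_antipode_eq_smul (rb2 j)]
              simp [smul_mul_assoc, mul_smul_comm, mul_assoc]
          _ = counit (R := K) (rb.right j) •
                (S (ra.left i * rb.left j) *
                  (∑ k ∈ (ra2 i).index, (ra2 i).left k * S ((ra2 i).right k))) := by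
              rw [← Finset.smul_sum, ← Finset.mul_sum]
          _ = (counit (R := K) (ra.right i) * counit (R := K) (rb.right j)) •
                S (ra.left i * rb.left j) := by
              rw [sum_mul_antipode_eq_smul (ra2 i)]
              simp [mul_smul_comm, smul_smul, mul_comm]
    _ = S ((∑ i ∈ ra.index, counit (R := K) (ra.right i) • ra.left i) *
          (∑ j ∈ rb.index, counit (R := K) (rb.right j) • rb.left j)) := by
        rw [Finset.sum_mul_sum, map_sum]
        refine Finset.sum_congr rfl fun i _ => ?_
        rw [map_sum]
        refine Finset.sum_congr rfl fun j _ => ?_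
        rw [smul_mul_smul_comm, map_smul]
    _ = S (a * b) := by
        rw [sum_counit_right_smul_left, sum_counit_right_smul_left]

theorem master_eq_Sb_Sa (a b : H) (ra : Coalgebra.Repr K a (H × H)) (rb : Coalgebra.Repr K b (H × H))
    (ra1 : ∀ i, Coalgebra.Repr K (ra.left i) (H × H)) (ra2 : ∀ i, Coalgebra.Repr K (ra.right i) (H × H))
    (rb1 : ∀ j, Coalgebra.Repr K (rb.left j) (H × H)) (rb2 : ∀ j, Coalgebra.Repr K (rb.right j) (H × H)) :
    (∑ i ∈ ra.index, ∑ j ∈ rb.index, ∑ k ∈ (ra2 i).index, ∑ l ∈ (rb2 j).index,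
        antipode (R := K) (ra.left i * rb.left j) *
          (((ra2 i).left k * (rb2 j).left l) *
            (antipode (R := K) ((rb2 j).right l) * antipode (R := K) ((ra2 i).right k))))
      = antipode (R := K) b * antipode (R := K) a := by
  set S : H →ₗ[K] H := antipode (R := K) with hS
  calc
    (∑ i ∈ ra.index, ∑ j ∈ rb.index, ∑ k ∈ (ra2 i).index, ∑ l ∈ (rb2 j).index,
        S (ra.left i * rb.left j) *
          (((ra2 i).left k * (rb2 j).left l) *
            (S ((rb2 j).right l) * S ((ra2 i).right k))))
      = ∑ j ∈ rb.index, ∑ l ∈ (rb2 j).index, ∑ i ∈ ra.index, ∑ k ∈ (ra2 i).index,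
          S (ra.left i * rb.left j) *
            (((ra2 i).left k * (rb2 j).left l) *
              (S ((rb2 j).right l) * S ((ra2 i).right k))) :=
        sum4_comm _ _ _ _ _
    _ = ∑ j ∈ rb.index, ∑ l ∈ (rb2 j).index, ∑ i ∈ ra.index, ∑ k ∈ (ra1 i).index,
          S ((ra1 i).left k * rb.left j) *
            (((ra1 i).right k * (rb2 j).left l) *
              (S ((rb2 j).right l) * S (ra.right i))) := by
        refine Finset.sum_congr rfl fun j _ => Finset.sum_congr rfl fun l _ => ?_
        have h5 := sum_mul3_eq a ra ra1 ra2
          (S ∘ₗ LinearMap.mulRight K (rb.left j))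
          (LinearMap.mulRight K ((rb2 j).left l))
          (LinearMap.mulLeft K (S ((rb2 j).right l)) ∘ₗ S)
        simpa using h5.symm
    _ = ∑ i ∈ ra.index, ∑ k ∈ (ra1 i).index, ∑ j ∈ rb.index, ∑ l ∈ (rb2 j).index,
          S ((ra1 i).left k * rb.left j) *
            (((ra1 i).right k * (rb2 j).left l) *
              (S ((rb2 j).right l) * S (ra.right i))) :=
        sum4_comm' _ _ _ _ _
    _ = ∑ i ∈ ra.index, ∑ k ∈ (ra1 i).index, ∑ j ∈ rb.index, ∑ l ∈ (rb1 j).index,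
          S ((ra1 i).left k * (rb1 j).left l) *
            (((ra1 i).right k * (rb1 j).right l) *
              (S (rb.right j) * S (ra.right i))) := by
        refine Finset.sum_congr rfl fun i _ => Finset.sum_congr rfl fun k _ => ?_
        have h5 := sum_mul3_eq b rb rb1 rb2
          (S ∘ₗ LinearMap.mulLeft K ((ra1 i).left k))
          (LinearMap.mulLeft K ((ra1 i).right k))
          (LinearMap.mulRight K (S (ra.right i)) ∘ₗ S)
        simpa using h5.symm
    _ = ∑ i ∈ ra.index, ∑ j ∈ rb.index, ∑ k ∈ (ra1 i).index, ∑ l ∈ (rb1 j).index,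
          S ((ra1 i).left k * (rb1 j).left l) *
            (((ra1 i).right k * (rb1 j).right l) *
              (S (rb.right j) * S (ra.right i))) :=
        Finset.sum_congr rfl fun i _ => Finset.sum_comm
    _ = ∑ i ∈ ra.index, ∑ j ∈ rb.index,
          (counit (R := K) (ra.left i) * counit (R := K) (rb.left j)) •
            (S (rb.right j) * S (ra.right i)) := by
        refine Finset.sum_congr rfl fun i _ => Finset.sum_congr rfl fun j _ => ?_
        calc
          (∑ k ∈ (ra1 i).index, ∑ l ∈ (rb1 j).index,
              S ((ra1 i).left k * (rb1 j).left l) *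
                (((ra1 i).right k * (rb1 j).right l) *
                  (S (rb.right j) * S (ra.right i))))
            = (∑ k ∈ (ra1 i).index, ∑ l ∈ (rb1 j).index,
                S ((ra1 i).left k * (rb1 j).left l) *
                  ((ra1 i).right k * (rb1 j).right l)) *
                (S (rb.right j) * S (ra.right i)) := by
              rw [Finset.sum_mul]
              refine Finset.sum_congr rfl fun k _ => ?_
              rw [Finset.sum_mul]
              refine Finset.sum_congr rfl fun l _ => ?_
              simp only [mul_assoc]
          _ = (counit (R := K) (ra.left i * rb.left j) • (1 : H)) *
                (S (rb.right j) * S (ra.right i)) := by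
              rw [sum_S_mul (ra.left i) (rb.left j) (ra1 i) (rb1 j)]
          _ = (counit (R := K) (ra.left i) * counit (R := K) (rb.left j)) •
                (S (rb.right j) * S (ra.right i)) := by
              rw [Bialgebra.counit_mul, smul_mul_assoc, one_mul]
    _ = (∑ j ∈ rb.index, counit (R := K) (rb.left j) • S (rb.right j)) *
          (∑ i ∈ ra.index, counit (R := K) (ra.left i) • S (ra.right i)) := by
        rw [Finset.sum_mul_sum, Finset.sum_comm]
        refine Finset.sum_congr rfl fun i _ => Finset.sum_congr rfl fun j _ => ?_
        rw [smul_mul_smul_comm, mul_comm]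
    _ = S b * S a := by
        simp only [← map_smul, ← map_sum]
        rw [sum_counit_left_smul_right, sum_counit_left_smul_right]

theorem antipode_mul_rev (a b : H) :
    antipode (R := K) (a * b) = antipode (R := K) b * antipode (R := K) a := by
  rw [← master_eq_S_mul a b (ℛ K a) (ℛ K b) (fun i => ℛ K _) (fun j => ℛ K _)]
  exact master_eq_Sb_Sa a b (ℛ K a) (ℛ K b) (fun i => ℛ K _) (fun i => ℛ K _)
    (fun j => ℛ K _) (fun j => ℛ K _)

theorem key_lemma (a : H) (w : H ⊗[K] H) :
    LinearMap.mul' K H ((antipode (R := K) (A := H)).rTensor H (Coalgebra.comul a * w)) =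
    counit (R := K) a • LinearMap.mul' K H ((antipode (R := K) (A := H)).rTensor H w) := by
  induction w using TensorProduct.induction_on with
  | zero => simp
  | add x y hx hy => rw [mul_add, map_add, map_add, hx, hy, map_add, map_add, smul_add]
  | tmul f g =>
    set S : H →ₗ[K] H := antipode (R := K) with hS
    have ra := ℛ K a
    have hmul : Coalgebra.comul (R := K) a * (f ⊗ₜ[K] g) =
        ∑ i ∈ ra.index, (ra.left i * f) ⊗ₜ[K] (ra.right i * g) := by
      rw [← ra.eq, Finset.sum_mul]
      simp [Algebra.TensorProduct.tmul_mul_tmul]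
    rw [hmul, map_sum, map_sum]
    calc
      ∑ i ∈ ra.index, LinearMap.mul' K H (S.rTensor H ((ra.left i * f) ⊗ₜ[K] (ra.right i * g)))
          = ∑ i ∈ ra.index, S f * ((S (ra.left i) * ra.right i) * g) := by
            refine Finset.sum_congr rfl fun i _ => ?_
            rw [LinearMap.rTensor_tmul, LinearMap.mul'_apply]
            rw [hS, antipode_mul_rev (ra.left i) f]
            simp only [mul_assoc]
      _ = S f * ((∑ i ∈ ra.index, S (ra.left i) * ra.right i) * g) := by
            rw [← Finset.mul_sum, ← Finset.sum_mul]
      _ = counit (R := K) a • LinearMap.mul' K H (S.rTensor H (f ⊗ₜ[K] g)) := by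
            rw [hS, sum_antipode_mul_eq_smul ra]
            simp [smul_mul_assoc, mul_smul_comm]

end TwistAux
end TwistAux
set_option maxHeartbeats 800000

variable {K H : Type*} [Field K] [Ring H] [HopfAlgebra K H]

theorem twist_lemma_one (J J' : H ⊗[K] H)
    (hJ : J * J' = 1) (hJ' : J' * J = 1) (hc : IsTwist K H J) (hn : IsNormalized K H J) :
    TensorProduct.map (LinearMap.mul' K H ∘ₗ (anti K H).rTensor H) LinearMap.id
        ((Algebra.TensorProduct.assoc K K K H H H).symm (idComul K H J)) =
      (QJ K H J ⊗ₜ 1) * J' := by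
  set μS : H ⊗[K] H →ₗ[K] H := LinearMap.mul' K H ∘ₗ (anti K H).rTensor H with hμS
  set L : H ⊗[K] (H ⊗[K] H) →ₗ[K] H ⊗[K] H :=
    TensorProduct.map μS LinearMap.id ∘ₗ
      (Algebra.TensorProduct.assoc K K K H H H).symm.toLinearMap with hL
  have happ : ∀ z : H ⊗[K] (H ⊗[K] H),
      L z = TensorProduct.map μS LinearMap.id
        ((Algebra.TensorProduct.assoc K K K H H H).symm z) := fun z => rfl
  -- step 1 : L (u * (1 ⊗ v)) = L u * v
  have step1 : ∀ (v : H ⊗[K] H) (u : H ⊗[K] (H ⊗[K] H)), L (u * (1 ⊗ₜ[K] v)) = L u * v := by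
    intro v
    have hmaps : (LinearMap.mulRight K v) ∘ₗ L = L ∘ₗ (LinearMap.mulRight K ((1 : H) ⊗ₜ[K] v)) := by
      ext a b c
      simp only [LinearMap.coe_comp, Function.comp_apply, AlgebraTensorModule.curry_apply,
        TensorProduct.curry_apply, LinearMap.coe_restrictScalars, LinearMap.mulRight_apply]
      induction v using TensorProduct.induction_on with
      | zero => simp
      | add v1 v2 h1 h2 =>
        simp only [tmul_add, mul_add, map_add, ← h1, ← h2]
      | tmul f g =>
        rw [Algebra.TensorProduct.tmul_mul_tmul, Algebra.TensorProduct.tmul_mul_tmul]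
        simp [hL, hμS, Algebra.TensorProduct.assoc_symm_tmul, mul_assoc]
    intro u
    have := LinearMap.congr_fun hmaps u
    simpa using this.symm
  -- step 2 : L (comulId x * assoc (J ⊗ 1)) = QJ J ⊗ epsId x
  have step2 : ∀ x : H ⊗[K] H,
      L (comulId K H x * (Algebra.TensorProduct.assoc K K K H H H (J ⊗ₜ[K] (1 : H)))) =
        QJ K H J ⊗ₜ[K] epsId K H x := by
    have hmaps :
        (L ∘ₗ (LinearMap.mulRight K (Algebra.TensorProduct.assoc K K K H H H (J ⊗ₜ[K] (1 : H)))) ∘ₗ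
          (comulId K H).toLinearMap) =
        (TensorProduct.mk K H H (QJ K H J)) ∘ₗ (epsId K H).toLinearMap := by
      ext a b
      simp only [LinearMap.coe_comp, Function.comp_apply, AlgebraTensorModule.curry_apply,
        TensorProduct.curry_apply, LinearMap.coe_restrictScalars, LinearMap.mulRight_apply,
        AlgHom.toLinearMap_apply, TensorProduct.mk_apply]
      have h1 : comulId K H (a ⊗ₜ[K] b) =
          Algebra.TensorProduct.assoc K K K H H H ((Coalgebra.comul a) ⊗ₜ[K] b) := rfl
      rw [h1, ← map_mul, Algebra.TensorProduct.tmul_mul_tmul, mul_one]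
      rw [happ]
      rw [AlgEquiv.symm_apply_apply]
      have h2 : epsId K H (a ⊗ₜ[K] b) = Coalgebra.counit (R := K) a • b := by
        simp [epsId, Algebra.TensorProduct.lid_tmul]
      rw [h2]
      have h3 : TensorProduct.map μS LinearMap.id ((Coalgebra.comul a * J) ⊗ₜ[K] b) =
          (μS (Coalgebra.comul a * J)) ⊗ₜ[K] b := rfl
      rw [h3, hμS]
      have h4 := TwistAux.key_lemma (K := K) a J
      have h5 : (LinearMap.mul' K H ∘ₗ (anti K H).rTensor H) (Coalgebra.comul a * J) =
          Coalgebra.counit (R := K) a • (LinearMap.mul' K H ((anti K H).rTensor H J)) := h4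
      rw [h5]
      rw [smul_tmul]
      rfl
    intro x
    have := LinearMap.congr_fun hmaps x
    simpa using this
  -- assemble
  have hc' : comulId K H J * (Algebra.TensorProduct.assoc K K K H H H (J ⊗ₜ[K] (1 : H))) =
      idComul K H J * ((1 : H) ⊗ₜ[K] J) := hc
  have h6 : L (comulId K H J * (Algebra.TensorProduct.assoc K K K H H H (J ⊗ₜ[K] (1 : H)))) =
      L (idComul K H J * ((1 : H) ⊗ₜ[K] J)) := by rw [hc']
  rw [step2 J, step1 J (idComul K H J), hn.1] at h6
  have h7 : L (idComul K H J) = (QJ K H J ⊗ₜ[K] (1 : H)) * J' := by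
    calc L (idComul K H J) = L (idComul K H J) * 1 := by rw [mul_one]
      _ = L (idComul K H J) * (J * J') := by rw [hJ]
      _ = (L (idComul K H J) * J) * J' := by rw [mul_assoc]
      _ = (QJ K H J ⊗ₜ[K] (1 : H)) * J' := by rw [← h6]
  rw [← happ]
  exact h7
end

section
/- Let H be a Hopf algebra and J a normalized twist for H with inverse J⁻¹ = Σ J⁻⁽¹⁾ ⊗ J⁻⁽²⁾. Then Σ J⁻⁽¹⁾·S(J⁻⁽²⁾₍₁₎) ⊗ S(J⁻⁽²⁾₍₂₎) = (Q_J⁻¹ ⊗ 1)·(S ⊗ S)(J), where Q_J = Σ S(J⁽¹⁾)·J⁽²⁾. -/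
open TensorProduct

section AntipodeAux
open Coalgebra HopfAlgebra
variable {K H : Type*} [Field K] [Ring H] [HopfAlgebra K H]

lemma repr_sum_counit_right_smul {M : Type*} [AddCommMonoid M] [Module K M]
    (f : H →ₗ[K] M) {a : H} (r : Repr K a (H × H)) :
    ∑ i ∈ r.index, counit (R := K) (r.right i) • f (r.left i) = f a := by
  have h := sum_tmul_counit_eq r
  apply_fun TensorProduct.lift (((LinearMap.lsmul K M).flip).comp f) at h
  simp only [map_sum, lift.tmul, LinearMap.coe_comp, Function.comp_apply,
    LinearMap.flip_apply, LinearMap.lsmul_apply, one_smul] at h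
  exact h

lemma repr_sum_counit_left_smul {M : Type*} [AddCommMonoid M] [Module K M]
    (f : H →ₗ[K] M) {a : H} (r : Repr K a (H × H)) :
    ∑ i ∈ r.index, counit (R := K) (r.left i) • f (r.right i) = f a := by
  have h := sum_counit_tmul_eq r
  apply_fun TensorProduct.lift ((((LinearMap.lsmul K M).flip).comp f).flip) at h
  simp only [map_sum, lift.tmul, LinearMap.coe_comp, Function.comp_apply,
    LinearMap.flip_apply, LinearMap.lsmul_apply, one_smul] at h
  exact h

lemma key_mul_antipode (x y : H) (rx : Repr K x (H × H)) (ry : Repr K y (H × H)) :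
    ∑ k ∈ rx.index, ∑ l ∈ ry.index,
      (rx.left k * ry.left l) * antipode (R := K) (rx.right k * ry.right l) =
      counit (R := K) (x * y) • (1 : H) := by
  have hc : comul (R := K) (x * y) = comul x * comul y := Bialgebra.comul_mul x y
  rw [← rx.eq, ← ry.eq, Finset.sum_mul_sum] at hc
  simp only [Algebra.TensorProduct.tmul_mul_tmul] at hc
  have h := mul_antipode_lTensor_comul_apply (R := K) (a := x * y)
  rw [hc] at h
  simp only [map_sum, LinearMap.lTensor_tmul, LinearMap.mul'_apply] at h
  rw [h, Algebra.smul_def, mul_one]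

/-- `μ₃ : H ⊗ (H ⊗ H) → H`, `x ⊗ (y ⊗ z) ↦ x * (y * z)`. -/
noncomputable def mu3 (K H : Type*) [Field K] [Ring H] [Algebra K H] :
    H ⊗[K] (H ⊗[K] H) →ₗ[K] H :=
  (LinearMap.mul' K H) ∘ₗ (LinearMap.mul' K H).lTensor H

@[simp] lemma mu3_tmul {K H : Type*} [Field K] [Ring H] [Algebra K H] (x y z : H) :
    mu3 K H (x ⊗ₜ (y ⊗ₜ z)) = x * (y * z) := rfl

lemma claimB (a b : H) (rb : Repr K b (H × H))
    (s1 : ∀ j, Repr K (rb.left j) (H × H)) (s2 : ∀ j, Repr K (rb.right j) (H × H)) :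
    ∑ j ∈ rb.index, ∑ l ∈ (s2 j).index,
      antipode (R := K) (rb.left j) *
        ((s2 j).left l * antipode (R := K) (a * (s2 j).right l)) =
      antipode (R := K) (a * b) := by
  have h := sum_map_tmul_tmul_eq (R := K) (antipode (R := K) (A := H))
    (LinearMap.id (R := K) (M := H))
    ((antipode (R := K) (A := H)) ∘ₗ (LinearMap.mulLeft K a)) b
    (repr := rb) (a₁ := s1) (a₂ := s2)
  apply_fun mu3 K H at h
  simp only [map_sum, mu3_tmul, LinearMap.id_coe, id_eq, LinearMap.coe_comp,
    Function.comp_apply, LinearMap.mulLeft_apply] at h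
  rw [h]
  have step : ∀ j ∈ rb.index, ∑ l ∈ (s1 j).index,
      antipode (R := K) ((s1 j).left l) *
        ((s1 j).right l * antipode (R := K) (a * rb.right j)) =
      counit (R := K) (rb.left j) • antipode (R := K) (a * rb.right j) := by
    intro j _
    calc ∑ l ∈ (s1 j).index, antipode (R := K) ((s1 j).left l) *
          ((s1 j).right l * antipode (R := K) (a * rb.right j))
        = (∑ l ∈ (s1 j).index, antipode (R := K) ((s1 j).left l) * (s1 j).right l) *
            antipode (R := K) (a * rb.right j) := by
          rw [Finset.sum_mul]
          exact Finset.sum_congr rfl fun l _ => (mul_assoc _ _ _).symm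
      _ = _ := by rw [sum_antipode_mul_eq_smul (s1 j), smul_mul_assoc, one_mul]
  rw [Finset.sum_congr rfl step]
  simpa using repr_sum_counit_left_smul
    ((antipode (R := K) (A := H)) ∘ₗ (LinearMap.mulLeft K a)) rb

lemma claimA (c d e a : H) (ra : Repr K a (H × H))
    (r1 : ∀ i, Repr K (ra.left i) (H × H)) (r2 : ∀ i, Repr K (ra.right i) (H × H)) :
    ∑ i ∈ ra.index, ∑ k ∈ (r2 i).index,
      (antipode (R := K) c * antipode (R := K) (ra.left i)) *
        (((r2 i).left k * d) * antipode (R := K) ((r2 i).right k * e)) =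
      antipode (R := K) c * (d * antipode (R := K) (a * e)) := by
  have h := sum_map_tmul_tmul_eq (R := K)
    ((LinearMap.mulLeft K (antipode (R := K) c)) ∘ₗ (antipode (R := K) (A := H)))
    (LinearMap.mulRight K d)
    ((antipode (R := K) (A := H)) ∘ₗ (LinearMap.mulRight K e)) a
    (repr := ra) (a₁ := r1) (a₂ := r2)
  apply_fun mu3 K H at h
  simp only [map_sum, mu3_tmul, LinearMap.coe_comp, Function.comp_apply,
    LinearMap.mulLeft_apply, LinearMap.mulRight_apply] at h
  rw [show (∑ i ∈ ra.index, ∑ k ∈ (r2 i).index,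
      (antipode (R := K) c * antipode (R := K) (ra.left i)) *
        (((r2 i).left k * d) * antipode (R := K) ((r2 i).right k * e))) =
      (∑ i ∈ ra.index, ∑ k ∈ (r2 i).index,
      antipode (R := K) c * antipode (R := K) (ra.left i) *
        ((r2 i).left k * d * antipode (R := K) ((r2 i).right k * e))) from rfl]
  rw [h]
  have step : ∀ i ∈ ra.index, ∑ k ∈ (r1 i).index,
      antipode (R := K) c * antipode (R := K) ((r1 i).left k) *
        ((r1 i).right k * d * antipode (R := K) (ra.right i * e)) =
      counit (R := K) (ra.left i) •
        (antipode (R := K) c * (d * antipode (R := K) (ra.right i * e))) := by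
    intro i _
    calc ∑ k ∈ (r1 i).index, antipode (R := K) c * antipode (R := K) ((r1 i).left k) *
          ((r1 i).right k * d * antipode (R := K) (ra.right i * e))
        = antipode (R := K) c *
            ((∑ k ∈ (r1 i).index, antipode (R := K) ((r1 i).left k) * (r1 i).right k) *
              (d * antipode (R := K) (ra.right i * e))) := by
          rw [Finset.sum_mul, Finset.mul_sum]
          exact Finset.sum_congr rfl fun k _ => by noncomm_ring
      _ = _ := by
          rw [sum_antipode_mul_eq_smul (r1 i), smul_mul_assoc, one_mul, mul_smul_comm]
  rw [Finset.sum_congr rfl step]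
  simpa using repr_sum_counit_left_smul
    ((LinearMap.mulLeft K (antipode (R := K) c)) ∘ₗ (LinearMap.mulLeft K d) ∘ₗ
      (antipode (R := K) (A := H)) ∘ₗ (LinearMap.mulRight K e)) ra

lemma antipode_mul_rev (a b : H) :
    antipode (R := K) (a * b) = antipode (R := K) b * antipode (R := K) (A := H) a := by
  obtain ⟨ra⟩ : Nonempty (Repr K a (H × H)) := ⟨ℛ K a⟩
  obtain ⟨rb⟩ : Nonempty (Repr K b (H × H)) := ⟨ℛ K b⟩
  let r1 : ∀ i, Repr K (ra.left i) (H × H) := fun i => ℛ K _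
  let r2 : ∀ i, Repr K (ra.right i) (H × H) := fun i => ℛ K _
  let s1 : ∀ j, Repr K (rb.left j) (H × H) := fun j => ℛ K _
  let s2 : ∀ j, Repr K (rb.right j) (H × H) := fun j => ℛ K _
  have ha : antipode (R := K) (A := H) a =
      ∑ i ∈ ra.index, counit (R := K) (ra.right i) • antipode (R := K) (ra.left i) :=
    (repr_sum_counit_right_smul (antipode (R := K) (A := H)) ra).symm
  have hb : antipode (R := K) (A := H) b =
      ∑ j ∈ rb.index, counit (R := K) (rb.right j) • antipode (R := K) (rb.left j) :=
    (repr_sum_counit_right_smul (antipode (R := K) (A := H)) rb).symm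
  rw [ha, hb, Finset.sum_mul_sum]
  have step1 : ∀ j ∈ rb.index, ∀ i ∈ ra.index,
      (counit (R := K) (rb.right j) • antipode (R := K) (rb.left j)) *
        (counit (R := K) (ra.right i) • antipode (R := K) (ra.left i)) =
      ∑ k ∈ (r2 i).index, ∑ l ∈ (s2 j).index,
        (antipode (R := K) (rb.left j) * antipode (R := K) (ra.left i)) *
          (((r2 i).left k * (s2 j).left l) *
            antipode (R := K) ((r2 i).right k * (s2 j).right l)) := by
    intro j _ i _
    rw [smul_mul_smul_comm]
    rw [show counit (R := K) (rb.right j) * counit (R := K) (ra.right i) =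
        counit (R := K) (ra.right i * rb.right j) by
      rw [Bialgebra.counit_mul]; ring]
    rw [show (counit (R := K) (ra.right i * rb.right j) •
          (antipode (R := K) (rb.left j) * antipode (R := K) (ra.left i))) =
        (antipode (R := K) (rb.left j) * antipode (R := K) (ra.left i)) *
          (counit (R := K) (ra.right i * rb.right j) • (1 : H)) by
      rw [mul_smul_comm, mul_one]]
    rw [← key_mul_antipode (ra.right i) (rb.right j) (r2 i) (s2 j), Finset.mul_sum]
    exact Finset.sum_congr rfl fun k _ => Finset.mul_sum _ _ _
  rw [Finset.sum_congr rfl fun j hj => Finset.sum_congr rfl fun i hi => step1 j hj i hi]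
  have swap : ∀ j ∈ rb.index,
      (∑ i ∈ ra.index, ∑ k ∈ (r2 i).index, ∑ l ∈ (s2 j).index,
        (antipode (R := K) (rb.left j) * antipode (R := K) (ra.left i)) *
          (((r2 i).left k * (s2 j).left l) *
            antipode (R := K) ((r2 i).right k * (s2 j).right l))) =
      ∑ l ∈ (s2 j).index, ∑ i ∈ ra.index, ∑ k ∈ (r2 i).index,
        (antipode (R := K) (rb.left j) * antipode (R := K) (ra.left i)) *
          (((r2 i).left k * (s2 j).left l) *
            antipode (R := K) ((r2 i).right k * (s2 j).right l)) := by
    intro j _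
    rw [Finset.sum_congr rfl fun i (_ : i ∈ ra.index) => Finset.sum_comm]
    exact Finset.sum_comm
  rw [Finset.sum_congr rfl swap]
  have stepA : ∀ j ∈ rb.index, ∀ l ∈ (s2 j).index,
      (∑ i ∈ ra.index, ∑ k ∈ (r2 i).index,
        (antipode (R := K) (rb.left j) * antipode (R := K) (ra.left i)) *
          (((r2 i).left k * (s2 j).left l) *
            antipode (R := K) ((r2 i).right k * (s2 j).right l))) =
      antipode (R := K) (rb.left j) *
        ((s2 j).left l * antipode (R := K) (a * (s2 j).right l)) := by
    intro j _ l _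
    exact claimA (rb.left j) ((s2 j).left l) ((s2 j).right l) a ra r1 r2
  rw [Finset.sum_congr rfl fun j hj => Finset.sum_congr rfl fun l hl => stepA j hj l hl]
  exact (claimB a b rb s1 s2).symm

end AntipodeAux


section MainAux
open Coalgebra HopfAlgebra
variable {K H : Type*} [Field K] [Ring H] [HopfAlgebra K H]

lemma anti_apply (x : H) : anti K H x = antipode (R := K) x := rfl

lemma anti_one : anti K H (1 : H) = 1 := by
  have h := mul_antipode_rTensor_comul_apply (R := K) (a := (1 : H))
  rw [Bialgebra.comul_one] at h
  rw [show ((1 : H ⊗[K] H)) = (1 : H) ⊗ₜ[K] (1 : H) from rfl] at h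
  simpa [anti_apply] using h

lemma TS_one : TensorProduct.map (anti K H) (anti K H) (1 : H ⊗[K] H) = 1 := by
  rw [Algebra.TensorProduct.one_def]
  simp [anti_one]

lemma TS_antimul (u v : H ⊗[K] H) :
    TensorProduct.map (anti K H) (anti K H) (u * v) =
      TensorProduct.map (anti K H) (anti K H) v * TensorProduct.map (anti K H) (anti K H) u := by
  induction u using TensorProduct.induction_on with
  | zero => simp
  | add x y hx hy => simp [add_mul, mul_add, hx, hy]
  | tmul a b =>
    induction v using TensorProduct.induction_on with
    | zero => simp
    | add x y hx hy => simp [add_mul, mul_add, hx, hy]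
    | tmul c d =>
      simp only [Algebra.TensorProduct.tmul_mul_tmul, TensorProduct.map_tmul, anti_apply,
        antipode_mul_rev]

/-- `Ψ : a ⊗ (y ⊗ z) ↦ (a * S y) ⊗ S z`. -/
noncomputable def Psi (K H : Type*) [Field K] [Ring H] [HopfAlgebra K H] :
    H ⊗[K] (H ⊗[K] H) →ₗ[K] H ⊗[K] H :=
  (TensorProduct.map (LinearMap.mul' K H) LinearMap.id) ∘ₗ
    (Algebra.TensorProduct.assoc K K K H H H).symm.toLinearMap ∘ₗ
    LinearMap.lTensor H (TensorProduct.map (anti K H) (anti K H))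

lemma Psi_tmul (a y z : H) :
    Psi K H (a ⊗ₜ (y ⊗ₜ z)) = (a * anti K H y) ⊗ₜ anti K H z := rfl

/-- `x ⊗ y ↦ x * S y` as a linear map. -/
noncomputable def QmapL (K H : Type*) [Field K] [Ring H] [HopfAlgebra K H] :
    H ⊗[K] H →ₗ[K] H :=
  LinearMap.mul' K H ∘ₗ (anti K H).lTensor H

lemma QJinv_eq (u : H ⊗[K] H) : QJinv K H u = QmapL K H u := rfl

lemma QmapL_tmul (x y : H) : QmapL K H (x ⊗ₜ y) = x * anti K H y := rfl

lemma QmapL_mul_comul (u : H ⊗[K] H) (g : H) :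
    QmapL K H (u * Coalgebra.comul g) = counit (R := K) g • QmapL K H u := by
  induction u using TensorProduct.induction_on with
  | zero => simp
  | add x y hx hy => simp [add_mul, hx, hy]
  | tmul y z =>
    obtain ⟨rg⟩ : Nonempty (Repr K g (H × H)) := ⟨ℛ K g⟩
    rw [← rg.eq, Finset.mul_sum, map_sum]
    simp only [Algebra.TensorProduct.tmul_mul_tmul, QmapL_tmul, anti_apply, antipode_mul_rev]
    calc ∑ i ∈ rg.index, y * rg.left i * (antipode (R := K) (rg.right i) * antipode (R := K) z)
        = y * ((∑ i ∈ rg.index, rg.left i * antipode (R := K) (rg.right i)) *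
            antipode (R := K) z) := by
          rw [Finset.sum_mul, Finset.mul_sum]
          exact Finset.sum_congr rfl fun i _ => by noncomm_ring
      _ = _ := by
          rw [sum_mul_antipode_eq_smul rg, smul_mul_assoc, one_mul, mul_smul_comm]

lemma Psi_assoc_eq (z : (H ⊗[K] H) ⊗[K] H) :
    Psi K H ((Algebra.TensorProduct.assoc K K K H H H) z) =
      TensorProduct.map (QmapL K H) (anti K H) z := by
  induction z using TensorProduct.induction_on with
  | zero => simp
  | add x y hx hy => simp only [map_add, hx, hy]
  | tmul p w =>
    induction p using TensorProduct.induction_on with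
    | zero => simp
    | add x y hx hy =>
      rw [TensorProduct.add_tmul, map_add, map_add, hx, hy, map_add]
    | tmul x y => rw [Algebra.TensorProduct.assoc_tmul]; rfl

lemma L3 (u w : H ⊗[K] H) :
    TensorProduct.map (QmapL K H) (anti K H)
      ((u ⊗ₜ (1 : H)) *
        (Algebra.TensorProduct.map (Bialgebra.comulAlgHom K H) (AlgHom.id K H) w)) =
      QJinv K H u ⊗ₜ anti K H (epsId K H w) := by
  rw [QJinv_eq]
  induction w using TensorProduct.induction_on with
  | zero => simp
  | add x y hx hy => simp only [map_add, mul_add, hx, hy, TensorProduct.tmul_add]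
  | tmul g h =>
    rw [show Algebra.TensorProduct.map (Bialgebra.comulAlgHom K H) (AlgHom.id K H) (g ⊗ₜ h) =
        (Coalgebra.comul (R := K) g) ⊗ₜ h from rfl]
    induction u using TensorProduct.induction_on with
    | zero => simp
    | add x y hx hy =>
      rw [TensorProduct.add_tmul, add_mul, map_add, hx, hy, map_add, TensorProduct.add_tmul]
    | tmul e f =>
      rw [Algebra.TensorProduct.tmul_mul_tmul, one_mul, TensorProduct.map_tmul,
        QmapL_mul_comul]
      rw [show epsId K H (g ⊗ₜ h) = counit (R := K) g • h by
        simp [epsId, Algebra.TensorProduct.lid_tmul]]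
      rw [map_smul, TensorProduct.smul_tmul]

lemma L5 (x : H ⊗[K] (H ⊗[K] H)) (v : H ⊗[K] H) :
    Psi K H x * TensorProduct.map (anti K H) (anti K H) v =
      Psi K H (((1 : H) ⊗ₜ v) * x) := by
  induction x using TensorProduct.induction_on with
  | zero => simp
  | add x y hx hy => simp only [map_add, add_mul, mul_add, hx, hy]
  | tmul a w =>
    rw [Algebra.TensorProduct.tmul_mul_tmul, one_mul]
    induction w using TensorProduct.induction_on with
    | zero => simp
    | add x y hx hy =>
      rw [TensorProduct.tmul_add, map_add, add_mul, hx, hy, mul_add, TensorProduct.tmul_add,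
        map_add]
    | tmul y z =>
      induction v using TensorProduct.induction_on with
      | zero => simp
      | add p q hp hq =>
        rw [map_add, mul_add, hp, hq, add_mul, TensorProduct.tmul_add, map_add]
      | tmul c d =>
        rw [Psi_tmul, TensorProduct.map_tmul, Algebra.TensorProduct.tmul_mul_tmul,
          Algebra.TensorProduct.tmul_mul_tmul, Psi_tmul]
        simp only [anti_apply, antipode_mul_rev, mul_assoc]

end MainAux

variable {K H : Type*} [Field K] [Ring H] [HopfAlgebra K H]

theorem twist_lemma_two (J J' : H ⊗[K] H)
    (hJ : J * J' = 1) (hJ' : J' * J = 1) (hc : IsTwist K H J) (hn : IsNormalized K H J) :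
    TensorProduct.map (LinearMap.mul' K H) LinearMap.id
        ((Algebra.TensorProduct.assoc K K K H H H).symm
          (LinearMap.lTensor H (TensorProduct.map (anti K H) (anti K H)) (idComul K H J'))) =
      (QJinv K H J' ⊗ₜ 1) * TensorProduct.map (anti K H) (anti K H) J := by
  have hL : TensorProduct.map (LinearMap.mul' K H) LinearMap.id
        ((Algebra.TensorProduct.assoc K K K H H H).symm
          (LinearMap.lTensor H (TensorProduct.map (anti K H) (anti K H)) (idComul K H J'))) =
      Psi K H (idComul K H J') := rfl
  rw [hL]
  -- (S ⊗ S)(J) and (S ⊗ S)(J') are mutually inverse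
  have hTS1 : TensorProduct.map (anti K H) (anti K H) J' *
      TensorProduct.map (anti K H) (anti K H) J = 1 := by
    rw [← TS_antimul, hJ, TS_one]
  -- (ε ⊗ id)(J') = 1
  have he : epsId K H J' = 1 := by
    have h := congrArg (epsId K H) hJ
    rw [map_mul, map_one, hn.1, one_mul] at h
    exact h
  -- transfer the cocycle identity to J'
  have hC'C : idComul K H J' * idComul K H J = 1 := by rw [← map_mul, hJ', map_one]
  have hD'D : ((1 : H) ⊗ₜ[K] J') * ((1 : H) ⊗ₜ[K] J) = 1 := by
    rw [Algebra.TensorProduct.tmul_mul_tmul, hJ', mul_one]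
    rfl
  have hAB : comulId K H J * (Algebra.TensorProduct.assoc K K K H H H (J ⊗ₜ (1 : H))) *
      ((Algebra.TensorProduct.assoc K K K H H H (J' ⊗ₜ (1 : H))) * comulId K H J') = 1 := by
    rw [mul_assoc, ← mul_assoc (Algebra.TensorProduct.assoc K K K H H H (J ⊗ₜ (1 : H))),
      ← map_mul, Algebra.TensorProduct.tmul_mul_tmul, hJ, mul_one]
    rw [show ((1 : H ⊗[K] H) ⊗ₜ[K] (1 : H)) = (1 : (H ⊗[K] H) ⊗[K] H) from rfl, map_one,
      one_mul, ← map_mul, hJ, map_one]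
  have hcoc : ((1 : H) ⊗ₜ[K] J') * idComul K H J' =
      (Algebra.TensorProduct.assoc K K K H H H (J' ⊗ₜ (1 : H))) * comulId K H J' := by
    refine left_inv_eq_right_inv (a := comulId K H J *
        (Algebra.TensorProduct.assoc K K K H H H (J ⊗ₜ (1 : H)))) ?_ ?_
    · rw [hc, mul_assoc, ← mul_assoc (idComul K H J'), hC'C, one_mul, hD'D]
    · exact hAB
  -- the key computation
  have key : Psi K H (idComul K H J') * TensorProduct.map (anti K H) (anti K H) J' =
      QJinv K H J' ⊗ₜ (1 : H) := by
    rw [L5, hcoc]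
    rw [show (Algebra.TensorProduct.assoc K K K H H H (J' ⊗ₜ (1 : H))) * comulId K H J' =
        (Algebra.TensorProduct.assoc K K K H H H) ((J' ⊗ₜ (1 : H)) *
          (Algebra.TensorProduct.map (Bialgebra.comulAlgHom K H) (AlgHom.id K H) J')) by
      rw [map_mul]; rfl]
    rw [Psi_assoc_eq, L3, he, anti_one]
  calc Psi K H (idComul K H J')
      = Psi K H (idComul K H J') * (TensorProduct.map (anti K H) (anti K H) J' *
          TensorProduct.map (anti K H) (anti K H) J) := by rw [hTS1, mul_one]
    _ = (Psi K H (idComul K H J') * TensorProduct.map (anti K H) (anti K H) J') *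
          TensorProduct.map (anti K H) (anti K H) J := by rw [mul_assoc]
    _ = (QJinv K H J' ⊗ₜ 1) * TensorProduct.map (anti K H) (anti K H) J := by rw [key]
end

section
/- Let H be a Hopf algebra and J a normalized twist. Then Sᴶ(a) = Q_J⁻¹·S(a)·Q_J satisfies the left antipode axiom for Δᴶ: m∘(Sᴶ ⊗ id)∘Δᴶ(a) = ε(a)·1 for all a ∈ H. -/
open TensorProduct

variable {K H : Type*} [Field K] [Ring H] [HopfAlgebra K H]

open Coalgebra

noncomputable def reprMul {ι κ : Type*} {a b : H} (ra : Repr K a ι) (rb : Repr K b κ) :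
    Repr K (a * b) (ι × κ) where
  index := ra.index ×ˢ rb.index
  left p := ra.left p.1 * rb.left p.2
  right p := ra.right p.1 * rb.right p.2
  eq := by
    rw [Finset.sum_product]
    rw [Bialgebra.comul_mul, ← ra.eq, ← rb.eq, Finset.sum_mul_sum]
    simp [Algebra.TensorProduct.tmul_mul_tmul]

local notation "S" => HopfAlgebra.antipode (R := K) (A := H)

lemma sum_counit_right_smul {ι : Type*} {a : H} (ra : Repr K a ι) :
    ∑ i ∈ ra.index, counit (R := K) (ra.right i) • ra.left i = a := by
  have h := congrArg (TensorProduct.rid K H) (sum_tmul_counit_eq ra)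
  rw [map_sum] at h
  simp only [rid_tmul] at h
  simpa using h

lemma sum_counit_left_smul {ι : Type*} {a : H} (ra : Repr K a ι) :
    ∑ i ∈ ra.index, counit (R := K) (ra.left i) • ra.right i = a := by
  have h := congrArg (TensorProduct.lid K H) (sum_counit_tmul_eq ra)
  rw [map_sum] at h
  simp only [lid_tmul] at h
  simpa using h

/-- `Σᵢ Σₖ (S(a₁ᵢ) * (a₂ᵢ)₁ₖ) ⊗ (a₂ᵢ)₂ₖ = 1 ⊗ a`. -/
lemma E1 {ι κ : Type*} {a : H} (ra : Repr K a ι) (r2 : (i : ι) → Repr K (ra.right i) κ) :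
    ∑ i ∈ ra.index, ∑ k ∈ (r2 i).index,
      (S (ra.left i) * (r2 i).left k) ⊗ₜ[K] (r2 i).right k = (1 : H) ⊗ₜ[K] a := by
  set Ψ : H ⊗[K] (H ⊗[K] H) →ₗ[K] H ⊗[K] H :=
    (LinearMap.rTensor H (LinearMap.mul' K H ∘ₗ LinearMap.rTensor H S)) ∘ₗ
      (TensorProduct.assoc K H H H).symm.toLinearMap with hΨ
  have hΨt : ∀ x y z : H, Ψ (x ⊗ₜ (y ⊗ₜ z)) = (S x * y) ⊗ₜ z := by
    intro x y z
    simp [hΨ]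
  have h := sum_tmul_tmul_eq ra (fun i => ℛ K (ra.left i)) r2
  have h2 := congrArg Ψ h
  rw [map_sum, map_sum] at h2
  simp only [map_sum, hΨt] at h2
  rw [← h2]
  -- now goal: Σᵢ Σₖ (S(left of r1) * right of r1) ⊗ ra.right i = 1 ⊗ a
  have : ∀ i ∈ ra.index, ∑ k ∈ (ℛ K (ra.left i)).index,
      (S ((ℛ K (ra.left i)).left k) * (ℛ K (ra.left i)).right k) ⊗ₜ[K] ra.right i
      = counit (R := K) (ra.left i) • ((1:H) ⊗ₜ[K] ra.right i) := by
    intro i _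
    rw [← TensorProduct.sum_tmul, HopfAlgebra.sum_antipode_mul_eq_algebraMap_counit,
      Algebra.algebraMap_eq_smul_one, TensorProduct.smul_tmul']
  rw [Finset.sum_congr rfl this]
  simp only [← TensorProduct.tmul_smul, ← TensorProduct.tmul_sum]
  rw [sum_counit_left_smul ra]

noncomputable def Phi (c d e : H) : H ⊗[K] H →ₗ[K] H :=
  LinearMap.mul' K H ∘ₗ
    TensorProduct.map (LinearMap.mulRight K d ∘ₗ LinearMap.mulLeft K c)
      (HopfAlgebra.antipode K ∘ₗ LinearMap.mulRight K e)

lemma Phi_tmul (c d e x y : H) : Phi c d e (x ⊗ₜ[K] y) = c * x * d * S (y * e) := by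
  simp [Phi, mul_assoc]

noncomputable def Theta (a : H) : H ⊗[K] H →ₗ[K] H :=
  LinearMap.mul' K H ∘ₗ
    TensorProduct.map LinearMap.id (HopfAlgebra.antipode K ∘ₗ LinearMap.mulLeft K a)

lemma Theta_tmul (a x y : H) : Theta a (x ⊗ₜ[K] y) = x * S (a * y) := by
  simp [Theta]

lemma reprMul_index_sum {M : Type*} [AddCommMonoid M] {ι κ : Type*} {a b : H} (ra : Repr K a ι)
    (rb : Repr K b κ) (f : ι × κ → M) :
    ∑ p ∈ (reprMul ra rb).index, f p = ∑ i ∈ ra.index, ∑ j ∈ rb.index, f (i, j) :=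
  Finset.sum_product _ _ _

lemma antipode_mul (a b : H) : S (a * b) = S b * S a := by
  set ra := ℛ K a with hra
  set rb := ℛ K b with hrb
  set r2a : (i : H × H) → Repr K (ra.right i) (H × H) := fun i => ℛ K (ra.right i) with hr2a
  set r2b : (j : H × H) → Repr K (rb.right j) (H × H) := fun j => ℛ K (rb.right j) with hr2b
  have hSa : S a = ∑ i ∈ ra.index, counit (R := K) (ra.right i) • S (ra.left i) := by
    conv_lhs => rw [← sum_counit_right_smul ra]
    rw [map_sum]; simp only [map_smul]
  have hSb : S b = ∑ j ∈ rb.index, counit (R := K) (rb.right j) • S (rb.left j) := by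
    conv_lhs => rw [← sum_counit_right_smul rb]
    rw [map_sum]; simp only [map_smul]
  have step2 : S b * S a = ∑ j ∈ rb.index, ∑ i ∈ ra.index, ∑ k ∈ (r2a i).index,
      ∑ l ∈ (r2b j).index,
      (S (rb.left j) * S (ra.left i)) *
        ((r2a i).left k * (r2b j).left l * S ((r2a i).right k * (r2b j).right l)) := by
    rw [hSa, hSb, Finset.sum_mul_sum]
    refine Finset.sum_congr rfl fun j _ => Finset.sum_congr rfl fun i _ => ?_
    rw [smul_mul_assoc, mul_smul_comm, smul_smul, mul_comm, ← Bialgebra.counit_mul,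
      Algebra.smul_def, Algebra.commutes, ← HopfAlgebra.sum_mul_antipode_eq_algebraMap_counit
        (reprMul (r2a i) (r2b j)), Finset.mul_sum]
    rw [reprMul_index_sum (r2a i) (r2b j)]
    rfl
  have step3 : S b * S a = ∑ j ∈ rb.index, ∑ l ∈ (r2b j).index, ∑ i ∈ ra.index,
      ∑ k ∈ (r2a i).index,
      (S (rb.left j) * S (ra.left i)) *
        ((r2a i).left k * (r2b j).left l * S ((r2a i).right k * (r2b j).right l)) := by
    rw [step2]
    refine Finset.sum_congr rfl fun j _ => ?_
    rw [Finset.sum_congr rfl fun i (_ : i ∈ ra.index) => Finset.sum_comm, Finset.sum_comm]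
  have key : ∀ c d e : H, (∑ i ∈ ra.index, ∑ k ∈ (r2a i).index,
      Phi c d e ((S (ra.left i) * (r2a i).left k) ⊗ₜ[K] (r2a i).right k))
      = c * d * S (a * e) := by
    intro c d e
    simp only [← map_sum]
    rw [E1 ra r2a, Phi_tmul, mul_one]
  have step4 : S b * S a = ∑ j ∈ rb.index, ∑ l ∈ (r2b j).index,
      S (rb.left j) * (r2b j).left l * S (a * (r2b j).right l) := by
    rw [step3]
    refine Finset.sum_congr rfl fun j _ => Finset.sum_congr rfl fun l _ => ?_
    rw [← key (S (rb.left j)) ((r2b j).left l) ((r2b j).right l)]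
    refine Finset.sum_congr rfl fun i _ => Finset.sum_congr rfl fun k _ => ?_
    rw [Phi_tmul]
    simp only [mul_assoc]
  have final : ∑ j ∈ rb.index, ∑ l ∈ (r2b j).index,
      S (rb.left j) * (r2b j).left l * S (a * (r2b j).right l)
      = Theta a ((1:H) ⊗ₜ[K] b) := by
    rw [← E1 rb r2b]
    simp only [map_sum, Theta_tmul]
  rw [step4, final, Theta_tmul, one_mul]


lemma antipode_one' : S (1 : H) = 1 := by
  have := HopfAlgebra.mul_antipode_rTensor_comul_apply (R := K) (1 : H)
  simpa [Bialgebra.comul_one, Algebra.TensorProduct.one_def] using this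

/-- `x ⊗ y ↦ S(x) * c * y`. -/
noncomputable def fS (c : H) : H ⊗[K] H →ₗ[K] H :=
  LinearMap.mul' K H ∘ₗ LinearMap.rTensor H (LinearMap.mulRight K c ∘ₗ HopfAlgebra.antipode K)

lemma fS_tmul (c x y : H) : fS c (x ⊗ₜ[K] y) = S x * c * y := by
  simp [fS]

/-- `x ⊗ y ↦ x * S(y)`. -/
noncomputable def gS : H ⊗[K] H →ₗ[K] H :=
  LinearMap.mul' K H ∘ₗ LinearMap.lTensor H (HopfAlgebra.antipode K)

lemma gS_tmul (x y : H) : gS (x ⊗ₜ[K] y) = x * S y := by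
  simp [gS]

lemma fS_one (c : H) : fS (K := K) c 1 = c := by
  rw [Algebra.TensorProduct.one_def, fS_tmul, antipode_one', one_mul, mul_one]

lemma fS_mul_tmul (c : H) (t : H ⊗[K] H) (x y : H) :
    fS c (t * x ⊗ₜ[K] y) = S x * fS c t * y := by
  induction t with
  | zero => simp
  | tmul u v =>
      rw [Algebra.TensorProduct.tmul_mul_tmul, fS_tmul, fS_tmul, antipode_mul]
      simp only [mul_assoc]
  | add s t hs ht => rw [add_mul, map_add, hs, ht, map_add]; noncomm_ring

lemma gS_tmul_mul (t : H ⊗[K] H) (x y : H) :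
    gS (x ⊗ₜ[K] y * t) = x * gS t * S y := by
  induction t with
  | zero => simp
  | tmul u v =>
      rw [Algebra.TensorProduct.tmul_mul_tmul, gS_tmul, gS_tmul, antipode_mul]
      simp only [mul_assoc]
  | add s t hs ht => rw [mul_add, map_add, hs, ht, map_add]; noncomm_ring

lemma fS1_apply (t : H ⊗[K] H) :
    fS (1 : H) t = LinearMap.mul' K H ((anti K H).rTensor H t) := by
  induction t with
  | zero => simp
  | tmul x y => rw [fS_tmul, mul_one, LinearMap.rTensor_tmul, LinearMap.mul'_apply]; rfl
  | add s t hs ht => rw [map_add, hs, ht, map_add, map_add]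

lemma QJ_eq_fS (J : H ⊗[K] H) : QJ K H J = fS (1 : H) J := (fS1_apply J).symm

lemma QJinv_eq_gS (J' : H ⊗[K] H) : QJinv K H J' = gS J' := by
  unfold QJinv gS anti
  rfl

lemma fS1_comul (a : H) :
    fS (1 : H) (Coalgebra.comul (R := K) a) = algebraMap K H (Coalgebra.counit a) := by
  rw [fS1_apply]
  exact HopfAlgebra.mul_antipode_rTensor_comul_apply a

lemma gS_comul (a : H) :
    gS (Coalgebra.comul (R := K) a) = algebraMap K H (Coalgebra.counit a) := by
  unfold gS
  exact HopfAlgebra.mul_antipode_lTensor_comul_apply a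

variable (J J' : H ⊗[K] H)

lemma fJ_mul (r : H ⊗[K] H) : fS (1 : H) (J * r) = fS (QJ K H J) r := by
  induction r with
  | zero => simp
  | tmul x y => rw [fS_mul_tmul, ← QJ_eq_fS, fS_tmul]
  | add s t hs ht => rw [mul_add, map_add, hs, ht, map_add]

lemma fQ_J'_mul (hJ : J * J' = 1) (s : H ⊗[K] H) :
    fS (QJ K H J) (J' * s) = fS (1 : H) s := by
  rw [← fJ_mul, ← mul_assoc, hJ, one_mul]

lemma fQ_J' (hJ : J * J' = 1) : fS (QJ K H J) J' = 1 := by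
  have h := fJ_mul (K := K) (H := H) J J'
  rw [hJ, fS_one] at h
  exact h.symm

lemma fS1_comul_mul (a : H) (r : H ⊗[K] H) :
    fS (1 : H) (Coalgebra.comul (R := K) a * r) = Coalgebra.counit (R := K) a • fS (1 : H) r := by
  induction r with
  | zero => simp
  | tmul x y =>
      rw [fS_mul_tmul, fS1_comul, fS_tmul, mul_one, Algebra.algebraMap_eq_smul_one,
        mul_smul_comm, mul_one, smul_mul_assoc]
  | add s t hs ht => rw [mul_add, map_add, hs, ht, map_add, smul_add]

lemma gS_mul_comul (r : H ⊗[K] H) (x : H) :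
    gS (r * Coalgebra.comul (R := K) x) = Coalgebra.counit (R := K) x • gS r := by
  induction r with
  | zero => simp
  | tmul p q =>
      rw [gS_tmul_mul, gS_comul, gS_tmul, Algebra.algebraMap_eq_smul_one,
        mul_smul_comm, mul_one, smul_mul_assoc]
  | add s t hs ht => rw [add_mul, map_add, hs, ht, map_add, smul_add]

lemma epsId_J' (hJ : J * J' = 1) (hn : IsNormalized K H J) : epsId K H J' = 1 := by
  have h := congrArg (epsId K H) hJ
  rw [map_mul, map_one, hn.1, one_mul] at h
  exact h

lemma idEps_J' (hJ : J * J' = 1) (hn : IsNormalized K H J) : idEps K H J' = 1 := by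
  have h := congrArg (idEps K H) hJ
  rw [map_mul, map_one, hn.2, one_mul] at h
  exact h

/-- `x ⊗ (y ⊗ z) ↦ x * S(y) * Q * z`. -/
noncomputable def phiQ : H ⊗[K] (H ⊗[K] H) →ₗ[K] H :=
  LinearMap.mul' K H ∘ₗ LinearMap.lTensor H (fS (QJ K H J))

lemma phiQ_tmul (x : H) (t : H ⊗[K] H) : phiQ J (x ⊗ₜ[K] t) = x * fS (QJ K H J) t := by
  simp [phiQ]

lemma phiQ_rhs (hJ : J * J' = 1) (t : H ⊗[K] H) :
    phiQ J (((1 : H) ⊗ₜ[K] J') * idComul K H t) = idEps K H t := by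
  induction t with
  | zero => simp
  | tmul x y =>
      have h1 : idComul K H (x ⊗ₜ[K] y) = x ⊗ₜ[K] Coalgebra.comul (R := K) y := by
        simp [idComul]
      have h2 : idEps K H (x ⊗ₜ[K] y) = Coalgebra.counit (R := K) y • x := by
        simp [idEps]
      rw [h1, h2, Algebra.TensorProduct.tmul_mul_tmul, one_mul, phiQ_tmul,
        fQ_J'_mul J J' hJ, fS1_comul, Algebra.algebraMap_eq_smul_one, mul_smul_comm, mul_one]
  | add s t hs ht => rw [map_add, mul_add, map_add, hs, ht, map_add]

lemma phiQ_assoc (s : H ⊗[K] H) (y : H) :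
    phiQ J ((Algebra.TensorProduct.assoc K K K H H H) (s ⊗ₜ[K] y)) = gS s * QJ K H J * y := by
  induction s with
  | zero => simp [TensorProduct.zero_tmul]
  | tmul a b =>
      rw [Algebra.TensorProduct.assoc_tmul, phiQ_tmul, fS_tmul, gS_tmul]
      noncomm_ring
  | add u v hu hv =>
      rw [TensorProduct.add_tmul, map_add, map_add, hu, hv, map_add, add_mul, add_mul]

lemma phiQ_lhs (t : H ⊗[K] H) :
    phiQ J ((Algebra.TensorProduct.assoc K K K H H H (J' ⊗ₜ[K] (1 : H))) * comulId K H t) =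
      QJinv K H J' * QJ K H J * epsId K H t := by
  induction t with
  | zero => simp
  | tmul x y =>
      have h1 : comulId K H (x ⊗ₜ[K] y) =
          Algebra.TensorProduct.assoc K K K H H H ((Coalgebra.comul (R := K) x) ⊗ₜ[K] y) := by
        simp [comulId]
      have h2 : epsId K H (x ⊗ₜ[K] y) = Coalgebra.counit (R := K) x • y := by
        simp [epsId]
      rw [h1, h2, ← map_mul, Algebra.TensorProduct.tmul_mul_tmul, one_mul,
        phiQ_assoc, gS_mul_comul, QJinv_eq_gS, smul_mul_assoc, smul_mul_assoc,
        mul_smul_comm]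
  | add s t hs ht => rw [map_add, mul_add, map_add, hs, ht, map_add, mul_add]

lemma cocycle_inv (hJ : J * J' = 1) (hJ' : J' * J = 1) (hc : IsTwist K H J) :
    Algebra.TensorProduct.assoc K K K H H H (J' ⊗ₜ[K] (1 : H)) * comulId K H J' =
      ((1 : H) ⊗ₜ[K] J') * idComul K H J' := by
  have hcc : comulId K H J * (Algebra.TensorProduct.assoc K K K H H H (J ⊗ₜ 1)) =
      idComul K H J * ((1 : H) ⊗ₜ J) := hc
  set A1 := comulId K H J
  set B1 := Algebra.TensorProduct.assoc K K K H H H (J ⊗ₜ[K] (1 : H))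
  set A2 := idComul K H J
  set B2 := (1 : H) ⊗ₜ[K] J
  set A1' := comulId K H J'
  set B1' := Algebra.TensorProduct.assoc K K K H H H (J' ⊗ₜ[K] (1 : H))
  set A2' := idComul K H J'
  set B2' := (1 : H) ⊗ₜ[K] J'
  have hA : A1 * A1' = 1 := by rw [← map_mul, hJ, map_one]
  have hB : B1 * B1' = 1 := by
    rw [← map_mul, Algebra.TensorProduct.tmul_mul_tmul, hJ, one_mul,
      ← Algebra.TensorProduct.one_def, map_one]
  have hA2' : A2' * A2 = 1 := by rw [← map_mul, hJ', map_one]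
  have hB2' : B2' * B2 = 1 := by
    rw [Algebra.TensorProduct.tmul_mul_tmul, hJ', one_mul, ← Algebra.TensorProduct.one_def]
  have k1 : (A1 * B1) * (B1' * A1') = 1 := by
    rw [mul_assoc, ← mul_assoc B1, hB, one_mul, hA]
  have k2 : (B2' * A2') * (A2 * B2) = 1 := by
    rw [mul_assoc, ← mul_assoc A2', hA2', one_mul, hB2']
  calc B1' * A1' = ((B2' * A2') * (A2 * B2)) * (B1' * A1') := by rw [k2, one_mul]
    _ = (B2' * A2') * ((A2 * B2) * (B1' * A1')) := by rw [mul_assoc]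
    _ = (B2' * A2') * ((A1 * B1) * (B1' * A1')) := by rw [hcc]
    _ = B2' * A2' := by rw [k1, mul_one]

lemma WQ_one (hJ : J * J' = 1) (hJ' : J' * J = 1) (hc : IsTwist K H J)
    (hn : IsNormalized K H J) : QJinv K H J' * QJ K H J = 1 := by
  have h := congrArg (phiQ J) (cocycle_inv J J' hJ hJ' hc)
  rw [phiQ_lhs J J' J', phiQ_rhs J J' hJ J', epsId_J' J J' hJ hn, idEps_J' J J' hJ hn,
    mul_one] at h
  exact h

theorem twisted_antipode_left (J J' : H ⊗[K] H)
    (hJ : J * J' = 1) (hJ' : J' * J = 1) (hc : IsTwist K H J) (hn : IsNormalized K H J) :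
    ∀ a : H, LinearMap.mul' K H ((antiJ K H J' J).rTensor H (comulJ K H J' J a)) =
      algebraMap K H (Bialgebra.counitAlgHom K H a) := by
  intro a
  have hF : ∀ t : H ⊗[K] H,
      LinearMap.mul' K H ((antiJ K H J' J).rTensor H t) =
        QJinv K H J' * fS (QJ K H J) t := by
    intro t
    induction t with
    | zero => simp
    | tmul x y =>
        rw [LinearMap.rTensor_tmul, LinearMap.mul'_apply, fS_tmul]
        show QJinv K H J' * (HopfAlgebra.antipode K x * QJ K H J) * y = _
        noncomm_ring
    | add s t hs ht => rw [map_add, map_add, hs, ht, map_add, mul_add]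
  have hco : comulJ K H J' J a = J' * (Coalgebra.comul (R := K) a * J) := rfl
  rw [hF, hco, fQ_J'_mul J J' hJ, fS1_comul_mul, ← QJ_eq_fS, mul_smul_comm,
    WQ_one J J' hJ hJ' hc hn, Bialgebra.counitAlgHom_apply, Algebra.algebraMap_eq_smul_one]
end
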